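/- arXiv:2403.01103 — 3 statements merged into one kernel-verified Lean document; each statement's English description precedes it below -/
import Mathlib

section
/- Let f_i(x) = ρx + b_i (i = 1,…,N) be an equi-contractive IFS on ℝ with 0 = b_1 < b_2 < … < b_N = 1 − ρ satisfying the finite-type condition, with totally self-similar attractor E, and let μ be the self-similar measure associated with a positive probability vector (p_i)_{i=1}^N. Then there exists a constant C ∈ (0,1) such that for every n ≥ 1 and every basic net interval Δ ∈ ℱ_n contained in a basic net interval Δ̂ ∈ ℱ_{n−1}, one has μ(Δ) ≥ C·μ(Δ̂). Consequently, μ(Δ) ≥ C^n for every Δ ∈ ℱ_n. -/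
open MeasureTheory Filter Set
open scoped ENNReal

/-- For a word `σ = σ₁…σₙ`, the composition `f_{σ₁} ∘ ⋯ ∘ f_{σₙ}`. -/
def iterMap {N : ℕ} (f : Fin N → ℝ → ℝ) : List (Fin N) → ℝ → ℝ
  | [] => id
  | i :: σ => f i ∘ iterMap f σ

/-- The set `P_n = {f_σ(0) : σ ∈ 𝒜_n} ∪ {f_σ(1) : σ ∈ 𝒜_n}` of endpoints of level-`n`
iterated images of `[0,1]`. -/
def PnSet {N : ℕ} (f : Fin N → ℝ → ℝ) (n : ℕ) : Set ℝ :=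
  {x | ∃ σ : List (Fin N), σ.length = n ∧ (iterMap f σ 0 = x ∨ iterMap f σ 1 = x)}

/-- `[a,b]` is a basic net interval of order `n`: `a < b` are consecutive points of `P_n`
and the open interval `(a,b)` meets the attractor `E`. -/
def IsNetInterval {N : ℕ} (f : Fin N → ℝ → ℝ) (E : Set ℝ) (n : ℕ) (a b : ℝ) : Prop :=
  a ∈ PnSet f n ∧ b ∈ PnSet f n ∧ a < b ∧
    (∀ y ∈ PnSet f n, y ≤ a ∨ b ≤ y) ∧ (Set.Ioo a b ∩ E).Nonempty

section Aux

variable {N : ℕ} {f : Fin N → ℝ → ℝ} {ρ : ℝ} {b : Fin N → ℝ}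

lemma iterMap_append (u v : List (Fin N)) :
    iterMap f (u ++ v) = iterMap f u ∘ iterMap f v := by
  induction u with
  | nil => rfl
  | cons i u ih => simp [iterMap, ih, Function.comp_assoc]

lemma iterMap_affine (hf : ∀ i x, f i x = ρ * x + b i) :
    ∀ (w : List (Fin N)) (x : ℝ), iterMap f w x = ρ ^ w.length * x + iterMap f w 0 := by
  intro w
  induction w with
  | nil => intro x; simp [iterMap]
  | cons i w ih =>
    intro x
    simp only [iterMap, Function.comp_apply, List.length_cons]
    rw [hf, hf, ih x, ih 0]
    ring

lemma iterMap_le_iff (hf : ∀ i x, f i x = ρ * x + b i) (hρ : 0 < ρ)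
    (w : List (Fin N)) {x y : ℝ} : iterMap f w x ≤ iterMap f w y ↔ x ≤ y := by
  rw [iterMap_affine hf w x, iterMap_affine hf w y]
  have : (0:ℝ) < ρ ^ w.length := pow_pos hρ _
  constructor
  · intro h; nlinarith
  · intro h; nlinarith

lemma iterMap_lt_iff (hf : ∀ i x, f i x = ρ * x + b i) (hρ : 0 < ρ)
    (w : List (Fin N)) {x y : ℝ} : iterMap f w x < iterMap f w y ↔ x < y := by
  simp only [← not_le, iterMap_le_iff hf hρ]

lemma iterMap_one (hf : ∀ i x, f i x = ρ * x + b i) (w : List (Fin N)) :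
    iterMap f w 1 = iterMap f w 0 + ρ ^ w.length := by
  rw [iterMap_affine hf]; ring

lemma iterMap_image_Icc (hf : ∀ i x, f i x = ρ * x + b i) (hρ : 0 < ρ)
    (w : List (Fin N)) (s t : ℝ) :
    iterMap f w '' Set.Icc s t = Set.Icc (iterMap f w s) (iterMap f w t) := by
  have hpow : (0:ℝ) < ρ ^ w.length := pow_pos hρ _
  ext y
  constructor
  · rintro ⟨x, hx, rfl⟩
    exact ⟨(iterMap_le_iff hf hρ w).2 hx.1, (iterMap_le_iff hf hρ w).2 hx.2⟩
  · rintro ⟨h1, h2⟩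
    refine ⟨(y - iterMap f w 0) / ρ ^ w.length, ⟨?_, ?_⟩, ?_⟩
    · rw [iterMap_affine hf] at h1
      rw [le_div_iff₀ hpow]; nlinarith
    · rw [iterMap_affine hf] at h2
      rw [div_le_iff₀ hpow]; nlinarith
    · rw [iterMap_affine hf]; field_simp; ring

lemma iterMap_maps_Icc (hf : ∀ i x, f i x = ρ * x + b i) (hρ : 0 < ρ)
    (hbl : ∀ i, 0 ≤ b i) (hbu : ∀ i, b i ≤ 1 - ρ) :
    ∀ (w : List (Fin N)), ∀ x ∈ Set.Icc (0:ℝ) 1, iterMap f w x ∈ Set.Icc (0:ℝ) 1 := by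
  intro w
  induction w with
  | nil => intro x hx; exact hx
  | cons i w ih =>
    intro x hx
    have h := ih x hx
    simp only [iterMap, Function.comp_apply]
    rw [hf]
    constructor
    · have := hbl i; nlinarith [h.1]
    · have := hbu i; nlinarith [h.2]

lemma exists_word_cover (E : Set ℝ) (hE : E = ⋃ i, f i '' E) :
    ∀ (ℓ : ℕ), ∀ y ∈ E, ∃ w : List (Fin N), w.length = ℓ ∧ y ∈ iterMap f w '' E := by
  intro ℓ
  induction ℓ with
  | zero => intro y hy; exact ⟨[], rfl, ⟨y, hy, rfl⟩⟩
  | succ k ih =>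
    intro y hy
    rw [hE] at hy
    obtain ⟨i, z, hz, rfl⟩ := by simpa using hy
    obtain ⟨w, hw, z', hz', hz'e⟩ := ih z hz
    exact ⟨i :: w, by simp [hw], ⟨z', hz', by simp [iterMap, hz'e]⟩⟩

lemma PnSet_finite (n : ℕ) : (PnSet f n).Finite := by
  have hsub : PnSet f n ⊆
      (Set.range fun v : Fin n → Fin N => iterMap f (List.ofFn v) 0) ∪
      (Set.range fun v : Fin n → Fin N => iterMap f (List.ofFn v) 1) := by
    rintro x ⟨σ, hlen, h | h⟩
    · left
      refine ⟨fun j => σ.get (Fin.cast hlen.symm j), ?_⟩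
      have hh : List.ofFn (fun j : Fin n => σ.get (Fin.cast hlen.symm j)) = σ := by
        subst hlen; exact List.ofFn_get σ
      show iterMap f (List.ofFn fun j : Fin n => σ.get (Fin.cast hlen.symm j)) 0 = x
      rw [hh, h]
    · right
      refine ⟨fun j => σ.get (Fin.cast hlen.symm j), ?_⟩
      have hh : List.ofFn (fun j : Fin n => σ.get (Fin.cast hlen.symm j)) = σ := by
        subst hlen; exact List.ofFn_get σ
      show iterMap f (List.ofFn fun j : Fin n => σ.get (Fin.cast hlen.symm j)) 1 = x
      rw [hh, h]
  exact Set.Finite.subset ((Set.finite_range _).union (Set.finite_range _)) hsub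

lemma mem_PnSet_word (n : ℕ) {x : ℝ} (σ : List (Fin N)) (hlen : σ.length = n)
    (h : iterMap f σ 0 = x ∨ iterMap f σ 1 = x) : x ∈ PnSet f n := ⟨σ, hlen, h⟩

lemma zero_mem_PnSet (hf0 : ∃ i, f i 0 = 0) (n : ℕ) : (0:ℝ) ∈ PnSet f n := by
  obtain ⟨i, hi⟩ := hf0
  refine ⟨List.replicate n i, List.length_replicate .., Or.inl ?_⟩
  induction n with
  | zero => rfl
  | succ k ih => simpa [List.replicate_succ, iterMap, ih] using hi

lemma one_mem_PnSet (hf1 : ∃ i, f i 1 = 1) (n : ℕ) : (1:ℝ) ∈ PnSet f n := by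
  obtain ⟨i, hi⟩ := hf1
  refine ⟨List.replicate n i, List.length_replicate .., Or.inr ?_⟩
  induction n with
  | zero => rfl
  | succ k ih => simpa [List.replicate_succ, iterMap, ih] using hi

lemma PnSet_mono (hf0 : ∃ i, f i 0 = 0) (hf1 : ∃ i, f i 1 = 1) (n : ℕ) :
    PnSet f n ⊆ PnSet f (n + 1) := by
  rintro x ⟨σ, hlen, h | h⟩
  · obtain ⟨i, hi⟩ := hf0
    exact ⟨σ ++ [i], by simp [hlen], Or.inl (by
      rw [iterMap_append]; simpa [iterMap, hi] using h)⟩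
  · obtain ⟨i, hi⟩ := hf1
    exact ⟨σ ++ [i], by simp [hlen], Or.inr (by
      rw [iterMap_append]; simpa [iterMap, hi] using h)⟩

end Aux

section M
variable {N : ℕ} {f : Fin N → ℝ → ℝ} {ρ : ℝ} {b : Fin N → ℝ} {p : Fin N → ℝ}

lemma f_measurable (hf : ∀ i x, f i x = ρ * x + b i) (i : Fin N) : Measurable (f i) := by
  have : f i = fun x => ρ * x + b i := funext (hf i)
  rw [this]
  exact (measurable_id.const_mul ρ).add_const _

lemma iterMap_measurable (hf : ∀ i x, f i x = ρ * x + b i) (w : List (Fin N)) :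
    Measurable (iterMap f w) := by
  have : iterMap f w = fun x => ρ ^ w.length * x + iterMap f w 0 :=
    funext (iterMap_affine hf w)
  rw [this]
  exact (measurable_id.const_mul _).add_const _

lemma measure_step (hf : ∀ i x, f i x = ρ * x + b i) (μ : Measure ℝ)
    (hμ : μ = ∑ i, ENNReal.ofReal (p i) • μ.map (f i)) {A : Set ℝ} (hA : MeasurableSet A) :
    μ A = ∑ i, ENNReal.ofReal (p i) * μ (f i ⁻¹' A) := by
  conv_lhs => rw [hμ]
  rw [Measure.finset_sum_apply]
  exact Finset.sum_congr rfl fun i _ => by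
    rw [Measure.smul_apply, Measure.map_apply (f_measurable hf i) hA, smul_eq_mul]

lemma measure_iter (hf : ∀ i x, f i x = ρ * x + b i) (μ : Measure ℝ)
    (hμ : μ = ∑ i, ENNReal.ofReal (p i) • μ.map (f i)) :
    ∀ (k : ℕ) {A : Set ℝ}, MeasurableSet A →
      μ A = ∑ v : Fin k → Fin N,
        (∏ j, ENNReal.ofReal (p (v j))) * μ (iterMap f (List.ofFn v) ⁻¹' A) := by
  intro k
  induction k with
  | zero =>
    intro A hA
    simp [iterMap]
  | succ k ih =>
    intro A hA
    rw [measure_step hf μ hμ hA]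
    have key : ∀ i : Fin N, μ (f i ⁻¹' A) = ∑ v : Fin k → Fin N,
        (∏ j, ENNReal.ofReal (p (v j))) * μ (iterMap f (List.ofFn v) ⁻¹' (f i ⁻¹' A)) :=
      fun i => ih ((f_measurable hf i) hA)
    calc ∑ i, ENNReal.ofReal (p i) * μ (f i ⁻¹' A)
        = ∑ i : Fin N, ∑ v : Fin k → Fin N, (ENNReal.ofReal (p i) *
            ((∏ j, ENNReal.ofReal (p (v j))) * μ (iterMap f (List.ofFn v) ⁻¹' (f i ⁻¹' A)))) := by
          exact Finset.sum_congr rfl fun i _ => by rw [key i, Finset.mul_sum]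
      _ = ∑ q : Fin N × (Fin k → Fin N), (ENNReal.ofReal (p q.1) *
            ((∏ j, ENNReal.ofReal (p (q.2 j))) * μ (iterMap f (List.ofFn q.2) ⁻¹' (f q.1 ⁻¹' A)))) := by
          exact (Fintype.sum_prod_type (f := fun q : Fin N × (Fin k → Fin N) =>
            ENNReal.ofReal (p q.1) * ((∏ j, ENNReal.ofReal (p (q.2 j))) *
              μ (iterMap f (List.ofFn q.2) ⁻¹' (f q.1 ⁻¹' A))))).symm
      _ = ∑ w : Fin (k+1) → Fin N,
            (∏ j, ENNReal.ofReal (p (w j))) * μ (iterMap f (List.ofFn w) ⁻¹' A) := by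
          refine Fintype.sum_equiv (Fin.consEquiv (fun _ : Fin (k+1) => Fin N)) _ _ fun q => ?_
          have h1 : List.ofFn ((Fin.consEquiv (fun _ : Fin (k+1) => Fin N)) q) = q.1 :: List.ofFn q.2 := by
            simp [List.ofFn_succ, Fin.consEquiv]
          rw [h1]
          have h2 : iterMap f (q.1 :: List.ofFn q.2) ⁻¹' A
              = iterMap f (List.ofFn q.2) ⁻¹' (f q.1 ⁻¹' A) := by
            simp [iterMap, Set.preimage_comp]
          rw [h2]
          rw [Fin.prod_univ_succ]
          have h3 : ((Fin.consEquiv (fun _ : Fin (k+1) => Fin N)) q) 0 = q.1 := by simp [Fin.consEquiv]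
          have h4 : ∀ j : Fin k, ((Fin.consEquiv (fun _ : Fin (k+1) => Fin N)) q) j.succ = q.2 j := by
            intro j; simp [Fin.consEquiv]
          rw [h3]
          simp only [h4]
          ring

end M

section M
variable {N : ℕ} {f : Fin N → ℝ → ℝ} {ρ : ℝ} {b : Fin N → ℝ} {p : Fin N → ℝ}
variable {μ : Measure ℝ} [IsProbabilityMeasure μ]

lemma sum_ofReal_p (hp : ∀ i, 0 < p i) (hp1 : ∑ i, p i = 1) :
    ∑ i : Fin N, ENNReal.ofReal (p i) = 1 := by
  rw [← ENNReal.ofReal_sum_of_nonneg (fun i _ => (hp i).le), hp1, ENNReal.ofReal_one]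

lemma mu_Iio_zero (hρ : ρ ∈ Set.Ioo (0:ℝ) 1) (hf : ∀ i x, f i x = ρ * x + b i)
    (hbl : ∀ i, 0 ≤ b i) (hp : ∀ i, 0 < p i) (hp1 : ∑ i, p i = 1)
    (hμ : μ = ∑ i, ENNReal.ofReal (p i) • μ.map (f i)) :
    μ (Set.Iio 0) = 0 := by
  have step : ∀ s : ℝ, s ≤ 0 → μ (Set.Iic s) ≤ μ (Set.Iic (s / ρ)) := by
    intro s hs
    rw [measure_step hf μ hμ measurableSet_Iic]
    have : ∀ i : Fin N, μ (f i ⁻¹' Set.Iic s) ≤ μ (Set.Iic (s / ρ)) := by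
      intro i
      refine measure_mono fun x hx => ?_
      simp only [Set.mem_preimage, Set.mem_Iic, hf] at hx ⊢
      rw [le_div_iff₀ hρ.1]
      have := hbl i
      nlinarith
    calc ∑ i, ENNReal.ofReal (p i) * μ (f i ⁻¹' Set.Iic s)
        ≤ ∑ i, ENNReal.ofReal (p i) * μ (Set.Iic (s / ρ)) :=
          Finset.sum_le_sum fun i _ => mul_le_mul_right (this i) _
      _ = (∑ i, ENNReal.ofReal (p i)) * μ (Set.Iic (s / ρ)) := by rw [Finset.sum_mul]
      _ = μ (Set.Iic (s / ρ)) := by rw [sum_ofReal_p hp hp1, one_mul]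
  have iter : ∀ (t : ℝ), 0 < t → ∀ k : ℕ, μ (Set.Iic (-t)) ≤ μ (Set.Iic (-t / ρ ^ k)) := by
    intro t ht k
    induction k with
    | zero => simp
    | succ k ih =>
      refine ih.trans ?_
      have h1 : -t / ρ ^ k ≤ 0 :=
        div_nonpos_of_nonpos_of_nonneg (by linarith) (le_of_lt (pow_pos hρ.1 k))
      have h2 : (-t / ρ ^ k) / ρ = -t / ρ ^ (k+1) := by
        rw [div_div, pow_succ]
      calc μ (Set.Iic (-t / ρ ^ k)) ≤ μ (Set.Iic ((-t / ρ ^ k) / ρ)) := step _ h1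
        _ = _ := by rw [h2]
  have key : ∀ t : ℝ, 0 < t → μ (Set.Iic (-t)) = 0 := by
    intro t ht
    have hanti : Antitone fun k : ℕ => Set.Iic (-t / ρ ^ k) := by
      intro m n hmn
      apply Set.Iic_subset_Iic.2
      have hm := pow_pos hρ.1 m
      have hn := pow_pos hρ.1 n
      have hpow : ρ ^ n ≤ ρ ^ m := pow_le_pow_of_le_one hρ.1.le hρ.2.le hmn
      rw [div_le_div_iff₀ hn hm]
      nlinarith
    have hint : ⋂ k : ℕ, Set.Iic (-t / ρ ^ k) = ∅ := by
      ext x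
      simp only [Set.mem_iInter, Set.mem_Iic, Set.mem_empty_iff_false, iff_false, not_forall,
        not_le]
      obtain ⟨k, hk⟩ := pow_unbounded_of_one_lt (max 1 (-x / t)) (one_lt_one_div hρ.1 hρ.2)
      refine ⟨k, ?_⟩
      have h1 : (1 / ρ) ^ k = 1 / ρ ^ k := by rw [div_pow, one_pow]
      have h2 : -x / t < 1 / ρ ^ k := lt_of_le_of_lt (le_max_right _ _) (by rwa [h1] at hk)
      have hρk : (0:ℝ) < ρ ^ k := pow_pos hρ.1 _
      rw [div_lt_div_iff₀ ht hρk] at h2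
      rw [div_lt_iff₀ hρk]  -- -t / ρ^k < x ↔ -t < x * ρ^k
      nlinarith
    have htend : Tendsto (fun k : ℕ => μ (Set.Iic (-t / ρ ^ k))) atTop
        (nhds (μ (⋂ k : ℕ, Set.Iic (-t / ρ ^ k)))) := by
      refine tendsto_measure_iInter_atTop (fun k => measurableSet_Iic.nullMeasurableSet) hanti
        ⟨0, measure_ne_top μ _⟩
    rw [hint] at htend
    simp only [measure_empty] at htend
    exact le_antisymm (ge_of_tendsto htend (Filter.Eventually.of_forall (iter t ht))) zero_le
  have hdecomp : Set.Iio (0:ℝ) ⊆ ⋃ k : ℕ, Set.Iic (-(1 / (k + 1 : ℝ))) := by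
    intro x hx
    simp only [Set.mem_Iio] at hx
    obtain ⟨k, hk⟩ := exists_nat_one_div_lt (show (0:ℝ) < -x by linarith)
    exact Set.mem_iUnion.2 ⟨k, by simp only [Set.mem_Iic]; push_cast; linarith⟩
  have hle : μ (Set.Iio 0) ≤ 0 :=
    calc μ (Set.Iio 0) ≤ μ (⋃ k : ℕ, Set.Iic (-(1 / (k + 1 : ℝ)))) := measure_mono hdecomp
      _ ≤ ∑' k : ℕ, μ (Set.Iic (-(1 / (k + 1 : ℝ)))) := measure_iUnion_le _
      _ = 0 := (tsum_congr fun k => key _ (by positivity)).trans tsum_zero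
  exact le_antisymm hle zero_le

lemma mu_Ioi_one (hρ : ρ ∈ Set.Ioo (0:ℝ) 1) (hf : ∀ i x, f i x = ρ * x + b i)
    (hbu : ∀ i, b i ≤ 1 - ρ) (hp : ∀ i, 0 < p i) (hp1 : ∑ i, p i = 1)
    (hμ : μ = ∑ i, ENNReal.ofReal (p i) • μ.map (f i)) :
    μ (Set.Ioi 1) = 0 := by
  have step : ∀ s : ℝ, 1 ≤ s → μ (Set.Ici s) ≤ μ (Set.Ici (1 + (s - 1) / ρ)) := by
    intro s hs
    rw [measure_step hf μ hμ measurableSet_Ici]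
    have : ∀ i : Fin N, μ (f i ⁻¹' Set.Ici s) ≤ μ (Set.Ici (1 + (s - 1) / ρ)) := by
      intro i
      refine measure_mono fun x hx => ?_
      simp only [Set.mem_preimage, Set.mem_Ici, hf] at hx ⊢
      have hd : (s - 1) / ρ ≤ x - 1 := by
        rw [div_le_iff₀ hρ.1]
        have := hbu i
        nlinarith
      linarith
    calc ∑ i, ENNReal.ofReal (p i) * μ (f i ⁻¹' Set.Ici s)
        ≤ ∑ i, ENNReal.ofReal (p i) * μ (Set.Ici (1 + (s - 1) / ρ)) :=
          Finset.sum_le_sum fun i _ => mul_le_mul_right (this i) _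
      _ = (∑ i, ENNReal.ofReal (p i)) * μ (Set.Ici (1 + (s - 1) / ρ)) := by rw [Finset.sum_mul]
      _ = μ (Set.Ici (1 + (s - 1) / ρ)) := by rw [sum_ofReal_p hp hp1, one_mul]
  have iter : ∀ (t : ℝ), 0 < t → ∀ k : ℕ, μ (Set.Ici (1 + t)) ≤ μ (Set.Ici (1 + t / ρ ^ k)) := by
    intro t ht k
    induction k with
    | zero => simp
    | succ k ih =>
      refine ih.trans ?_
      have hρk : (0:ℝ) < ρ ^ k := pow_pos hρ.1 k
      have h1 : (1:ℝ) ≤ 1 + t / ρ ^ k := by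
        have : 0 ≤ t / ρ ^ k := by positivity
        linarith
      have h2 : 1 + (1 + t / ρ ^ k - 1) / ρ = 1 + t / ρ ^ (k+1) := by
        rw [add_sub_cancel_left, div_div, pow_succ]
      calc μ (Set.Ici (1 + t / ρ ^ k)) ≤ μ (Set.Ici (1 + (1 + t / ρ ^ k - 1) / ρ)) := step _ h1
        _ = _ := by rw [h2]
  have key : ∀ t : ℝ, 0 < t → μ (Set.Ici (1 + t)) = 0 := by
    intro t ht
    have hanti : Antitone fun k : ℕ => Set.Ici (1 + t / ρ ^ k) := by
      intro m n hmn
      apply Set.Ici_subset_Ici.2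
      have hm := pow_pos hρ.1 m
      have hn := pow_pos hρ.1 n
      have hpow : ρ ^ n ≤ ρ ^ m := pow_le_pow_of_le_one hρ.1.le hρ.2.le hmn
      have : t / ρ ^ m ≤ t / ρ ^ n := by
        rw [div_le_div_iff₀ hm hn]; nlinarith
      linarith
    have hint : ⋂ k : ℕ, Set.Ici (1 + t / ρ ^ k) = ∅ := by
      ext x
      simp only [Set.mem_iInter, Set.mem_Ici, Set.mem_empty_iff_false, iff_false, not_forall,
        not_le]
      obtain ⟨k, hk⟩ := pow_unbounded_of_one_lt (max 1 ((x - 1) / t)) (one_lt_one_div hρ.1 hρ.2)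
      refine ⟨k, ?_⟩
      have h1 : (1 / ρ) ^ k = 1 / ρ ^ k := by rw [div_pow, one_pow]
      have h2 : (x - 1) / t < 1 / ρ ^ k := lt_of_le_of_lt (le_max_right _ _) (by rwa [h1] at hk)
      have hρk : (0:ℝ) < ρ ^ k := pow_pos hρ.1 _
      rw [div_lt_div_iff₀ ht hρk] at h2
      have : t / ρ ^ k > x - 1 := by rw [gt_iff_lt, lt_div_iff₀ hρk]; nlinarith
      linarith
    have htend : Tendsto (fun k : ℕ => μ (Set.Ici (1 + t / ρ ^ k))) atTop
        (nhds (μ (⋂ k : ℕ, Set.Ici (1 + t / ρ ^ k)))) := by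
      refine tendsto_measure_iInter_atTop (fun k => measurableSet_Ici.nullMeasurableSet) hanti
        ⟨0, measure_ne_top μ _⟩
    rw [hint] at htend
    simp only [measure_empty] at htend
    exact le_antisymm (ge_of_tendsto htend (Filter.Eventually.of_forall (iter t ht))) zero_le
  have hdecomp : Set.Ioi (1:ℝ) ⊆ ⋃ k : ℕ, Set.Ici (1 + 1 / (k + 1 : ℝ)) := by
    intro x hx
    simp only [Set.mem_Ioi] at hx
    obtain ⟨k, hk⟩ := exists_nat_one_div_lt (show (0:ℝ) < x - 1 by linarith)
    exact Set.mem_iUnion.2 ⟨k, by simp only [Set.mem_Ici]; push_cast; linarith⟩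
  have hle : μ (Set.Ioi 1) ≤ 0 :=
    calc μ (Set.Ioi 1) ≤ μ (⋃ k : ℕ, Set.Ici (1 + 1 / (k + 1 : ℝ))) := measure_mono hdecomp
      _ ≤ ∑' k : ℕ, μ (Set.Ici (1 + 1 / (k + 1 : ℝ))) := measure_iUnion_le _
      _ = 0 := (tsum_congr fun k => key _ (by positivity)).trans tsum_zero
  exact le_antisymm hle zero_le

lemma mu_atom0 (hρ : ρ ∈ Set.Ioo (0:ℝ) 1) (hf : ∀ i x, f i x = ρ * x + b i)
    (i0 : Fin N) (hb0 : b i0 = 0) (hpos : ∀ i, i ≠ i0 → 0 < b i) (hpi0 : p i0 < 1)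
    (hp : ∀ i, 0 < p i)
    (hμ : μ = ∑ i, ENNReal.ofReal (p i) • μ.map (f i))
    (hIio : μ (Set.Iio 0) = 0) : μ {(0:ℝ)} = 0 := by
  have hpre0 : f i0 ⁻¹' {(0:ℝ)} = {(0:ℝ)} := by
    ext x
    simp only [Set.mem_preimage, Set.mem_singleton_iff, hf, hb0, add_zero]
    constructor
    · intro h; nlinarith [hρ.1]
    · rintro rfl; ring
  have hpre : ∀ i, i ≠ i0 → μ (f i ⁻¹' {(0:ℝ)}) = 0 := by
    intro i hi
    refine le_antisymm (le_trans (measure_mono ?_) hIio.le) zero_le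
    intro x hx
    simp only [Set.mem_preimage, Set.mem_singleton_iff, hf] at hx
    have := hpos i hi
    simp only [Set.mem_Iio]
    nlinarith [hρ.1]
  have heq : μ {(0:ℝ)} = ENNReal.ofReal (p i0) * μ {(0:ℝ)} := by
    conv_lhs => rw [measure_step hf μ hμ (measurableSet_singleton _)]
    rw [Finset.sum_eq_single i0]
    · rw [hpre0]
    · intro i _ hi; rw [hpre i hi, mul_zero]
    · intro h; exact absurd (Finset.mem_univ i0) h
  by_contra hne
  have hlt : ENNReal.ofReal (p i0) * μ {(0:ℝ)} < 1 * μ {(0:ℝ)} := by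
    refine ENNReal.mul_lt_mul_left hne (measure_ne_top μ _) ?_
    exact ENNReal.ofReal_lt_one.2 hpi0
  rw [one_mul, ← heq] at hlt
  exact lt_irrefl _ hlt

lemma mu_atom1 (hρ : ρ ∈ Set.Ioo (0:ℝ) 1) (hf : ∀ i x, f i x = ρ * x + b i)
    (i1 : Fin N) (hb1 : b i1 = 1 - ρ) (hlt : ∀ i, i ≠ i1 → b i < 1 - ρ) (hpi1 : p i1 < 1)
    (hp : ∀ i, 0 < p i)
    (hμ : μ = ∑ i, ENNReal.ofReal (p i) • μ.map (f i))
    (hIoi : μ (Set.Ioi 1) = 0) : μ {(1:ℝ)} = 0 := by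
  have hpre0 : f i1 ⁻¹' {(1:ℝ)} = {(1:ℝ)} := by
    ext x
    simp only [Set.mem_preimage, Set.mem_singleton_iff, hf, hb1]
    constructor
    · intro h; nlinarith [hρ.1]
    · rintro rfl; ring
  have hpre : ∀ i, i ≠ i1 → μ (f i ⁻¹' {(1:ℝ)}) = 0 := by
    intro i hi
    refine le_antisymm (le_trans (measure_mono ?_) hIoi.le) zero_le
    intro x hx
    simp only [Set.mem_preimage, Set.mem_singleton_iff, hf] at hx
    have := hlt i hi
    simp only [Set.mem_Ioi]
    nlinarith [hρ.1]
  have heq : μ {(1:ℝ)} = ENNReal.ofReal (p i1) * μ {(1:ℝ)} := by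
    conv_lhs => rw [measure_step hf μ hμ (measurableSet_singleton _)]
    rw [Finset.sum_eq_single i1]
    · rw [hpre0]
    · intro i _ hi; rw [hpre i hi, mul_zero]
    · intro h; exact absurd (Finset.mem_univ i1) h
  by_contra hne
  have hlt' : ENNReal.ofReal (p i1) * μ {(1:ℝ)} < 1 * μ {(1:ℝ)} := by
    refine ENNReal.mul_lt_mul_left hne (measure_ne_top μ _) ?_
    exact ENNReal.ofReal_lt_one.2 hpi1
  rw [one_mul, ← heq] at hlt'
  exact lt_irrefl _ hlt'

lemma mu_Icc01 (hIio : μ (Set.Iio 0) = 0) (hIoi : μ (Set.Ioi 1) = 0) :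
    μ (Set.Icc (0:ℝ) 1) = 1 := by
  have hdecomp : (Set.univ : Set ℝ) ⊆ Set.Iio 0 ∪ Set.Icc 0 1 ∪ Set.Ioi 1 := by
    intro x _
    rcases lt_or_ge x 0 with h | h
    · exact Or.inl (Or.inl h)
    · rcases le_or_gt x 1 with h' | h'
      · exact Or.inl (Or.inr ⟨h, h'⟩)
      · exact Or.inr h'
  have h1 : (1:ℝ≥0∞) = μ Set.univ := measure_univ.symm
  have hle : (1:ℝ≥0∞) ≤ μ (Set.Icc 0 1) := by
    rw [h1]
    calc μ Set.univ ≤ μ (Set.Iio 0 ∪ Set.Icc 0 1 ∪ Set.Ioi 1) := measure_mono hdecomp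
      _ ≤ μ (Set.Iio 0 ∪ Set.Icc 0 1) + μ (Set.Ioi 1) := measure_union_le _ _
      _ ≤ μ (Set.Iio 0) + μ (Set.Icc 0 1) + μ (Set.Ioi 1) :=
          add_le_add_left (measure_union_le _ _) _
      _ = μ (Set.Icc 0 1) := by rw [hIio, hIoi, zero_add, add_zero]
  have hub : μ (Set.Icc (0:ℝ) 1) ≤ 1 := by
    have h2 := measure_mono (μ := μ) (Set.subset_univ (Set.Icc (0:ℝ) 1))
    simpa using h2
  exact le_antisymm hub hle

lemma mu_Iic0 (hIio : μ (Set.Iio 0) = 0) (h0 : μ {(0:ℝ)} = 0) : μ (Set.Iic 0) = 0 := by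
  have : Set.Iic (0:ℝ) ⊆ Set.Iio 0 ∪ {0} := by
    intro x hx
    rcases lt_or_eq_of_le (Set.mem_Iic.1 hx) with h | h
    · exact Or.inl h
    · exact Or.inr (by simp [h])
  refine le_antisymm ?_ zero_le
  calc μ (Set.Iic 0) ≤ μ (Set.Iio 0 ∪ {0}) := measure_mono this
    _ ≤ μ (Set.Iio 0) + μ {0} := measure_union_le _ _
    _ = 0 := by rw [hIio, h0, add_zero]

lemma mu_Ici1 (hIoi : μ (Set.Ioi 1) = 0) (h1 : μ {(1:ℝ)} = 0) : μ (Set.Ici 1) = 0 := by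
  have : Set.Ici (1:ℝ) ⊆ {1} ∪ Set.Ioi 1 := by
    intro x hx
    rcases eq_or_lt_of_le (Set.mem_Ici.1 hx) with h | h
    · exact Or.inl (by simp [h.symm])
    · exact Or.inr h
  refine le_antisymm ?_ zero_le
  calc μ (Set.Ici 1) ≤ μ ({1} ∪ Set.Ioi 1) := measure_mono this
    _ ≤ μ {1} + μ (Set.Ioi 1) := measure_union_le _ _
    _ = 0 := by rw [hIoi, h1, add_zero]

lemma mass_piece (hρ : (0:ℝ) < ρ) (hf : ∀ i x, f i x = ρ * x + b i)
    (hμ : μ = ∑ i, ENNReal.ofReal (p i) • μ.map (f i))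
    (hIcc : μ (Set.Icc 0 1) = 1) (u : List (Fin N)) :
    (∏ j : Fin u.length, ENNReal.ofReal (p (u.get j))) ≤ μ (iterMap f u '' Set.Icc 0 1) := by
  have hAeq : iterMap f u '' Set.Icc 0 1 = Set.Icc (iterMap f u 0) (iterMap f u 1) :=
    iterMap_image_Icc hf hρ u 0 1
  have hA : MeasurableSet (iterMap f u '' Set.Icc 0 1) := hAeq ▸ measurableSet_Icc
  have hid := measure_iter hf μ hμ u.length hA
  have hofn : List.ofFn u.get = u := List.ofFn_get u
  have hterm : (∏ j : Fin u.length, ENNReal.ofReal (p (u.get j))) *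
      μ (iterMap f (List.ofFn u.get) ⁻¹' (iterMap f u '' Set.Icc 0 1)) ≤
      μ (iterMap f u '' Set.Icc 0 1) := by
    rw [hid]
    exact Finset.single_le_sum (f := fun v : Fin u.length → Fin N =>
      (∏ j, ENNReal.ofReal (p (v j))) * μ (iterMap f (List.ofFn v) ⁻¹' (iterMap f u '' Set.Icc 0 1)))
      (fun _ _ => zero_le) (Finset.mem_univ u.get)
  refine le_trans ?_ hterm
  rw [hofn]
  have hsub : Set.Icc (0:ℝ) 1 ⊆ iterMap f u ⁻¹' (iterMap f u '' Set.Icc 0 1) :=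
    Set.subset_preimage_image _ _
  calc (∏ j : Fin u.length, ENNReal.ofReal (p (u.get j)))
      = (∏ j : Fin u.length, ENNReal.ofReal (p (u.get j))) * 1 := (mul_one _).symm
    _ ≤ _ := by
        apply mul_le_mul_right
        rw [← hIcc]
        exact measure_mono hsub

end M

section M
variable {N : ℕ} {f : Fin N → ℝ → ℝ} {ρ : ℝ} {b : Fin N → ℝ} {p : Fin N → ℝ}
variable {μ : Measure ℝ} [IsProbabilityMeasure μ]

lemma endpoint_ratio (hf : ∀ i x, f i x = ρ * x + b i) (hρ0 : 0 < ρ) (Γ : Finset ℝ)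
    (hΓ : ∀ n : ℕ, 1 ≤ n → ∀ σ ω : List (Fin N), σ.length = n → ω.length = n →
      |iterMap f σ 0 - iterMap f ω 0| / ρ ^ n ∈ Γ ∨
      1 < |iterMap f σ 0 - iterMap f ω 0| / ρ ^ n)
    (n : ℕ) (hn : 1 ≤ n) (e : ℝ) (he : e ∈ PnSet f n) (u : List (Fin N))
    (hulen : u.length = n) (hle : iterMap f u 0 ≤ e) (hge : e ≤ iterMap f u 0 + ρ ^ n) :
    ∃ g ∈ Γ, (e - iterMap f u 0) / ρ ^ n = g ∨ (e - iterMap f u 0) / ρ ^ n = 1 - g := by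
  obtain ⟨ω, hωlen, hcase⟩ := he
  have hρn : (0:ℝ) < ρ ^ n := pow_pos hρ0 n
  have hFTCr := hΓ n hn ω u hωlen hulen
  rcases hcase with h | h
  · have hDe : iterMap f ω 0 - iterMap f u 0 = e - iterMap f u 0 := by rw [h]
    have hDnn : 0 ≤ iterMap f ω 0 - iterMap f u 0 := by rw [hDe]; linarith
    have habs : |iterMap f ω 0 - iterMap f u 0| = iterMap f ω 0 - iterMap f u 0 :=
      abs_of_nonneg hDnn
    rcases hFTCr with hmem | hgt
    · rw [habs, hDe] at hmem
      exact ⟨_, hmem, Or.inl rfl⟩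
    · exfalso
      rw [habs, hDe, lt_div_iff₀ hρn] at hgt
      nlinarith
  · have hone : iterMap f ω 1 = iterMap f ω 0 + ρ ^ n := by
      rw [iterMap_one hf, hωlen]
    have hDe : iterMap f ω 0 - iterMap f u 0 = e - iterMap f u 0 - ρ ^ n := by
      rw [← h, hone]; ring
    have hDnp : iterMap f ω 0 - iterMap f u 0 ≤ 0 := by rw [hDe]; linarith
    have habs : |iterMap f ω 0 - iterMap f u 0| = -(iterMap f ω 0 - iterMap f u 0) :=
      abs_of_nonpos hDnp
    rcases hFTCr with hmem | hgt
    · refine ⟨_, hmem, Or.inr ?_⟩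
      rw [habs, hDe]
      field_simp
      ring
    · exfalso
      rw [habs, hDe, lt_div_iff₀ hρn] at hgt
      nlinarith

lemma term_lemma
    (hf : ∀ i x, f i x = ρ * x + b i) (hρ0 : 0 < ρ)
    {E : Set ℝ} (hE : E = ⋃ i, f i '' E) (hEsub : E ⊆ Set.Icc 0 1)
    (hTSS : ∀ ω : List (Fin N), ω ≠ [] →
      iterMap f ω '' E = iterMap f ω '' Set.Icc 0 1 ∩ E)
    (hμ : μ = ∑ i, ENNReal.ofReal (p i) • μ.map (f i))
    (hIcc : μ (Set.Icc 0 1) = 1) (hIic0 : μ (Set.Iic 0) = 0) (hIci1 : μ (Set.Ici 1) = 0)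
    (Γ : Finset ℝ)
    (hΓ : ∀ n : ℕ, 1 ≤ n → ∀ σ ω : List (Fin N), σ.length = n → ω.length = n →
      |iterMap f σ 0 - iterMap f ω 0| / ρ ^ n ∈ Γ ∨
      1 < |iterMap f σ 0 - iterMap f ω 0| / ρ ^ n)
    (m : ℕ) (pm : ℝ) (hpm_pos : 0 < pm) (hpm_lt1 : pm < 1) (hpm_le : ∀ i, pm ≤ p i)
    (hmH : ∀ A' B' : ℝ, (∃ g ∈ Γ, A' = g ∨ A' = 1 - g) → (∃ g ∈ Γ, B' = g ∨ B' = 1 - g) →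
      A' < B' → (E ∩ Set.Ioo A' B').Nonempty →
      ∃ w : List (Fin N), w.length ≤ m ∧ iterMap f w '' Set.Icc 0 1 ⊆ Set.Icc A' B')
    (n : ℕ) (hn : 1 ≤ n) (a B c d : ℝ) (hΔ : IsNetInterval f E n a B)
    (hΔ' : IsNetInterval f E (n-1) c d) (hsub : Set.Icc a B ⊆ Set.Icc c d)
    (u : List (Fin N)) (hulen : u.length = n - 1) :
    ENNReal.ofReal (pm ^ (m+1)) * μ (iterMap f u ⁻¹' Set.Icc c d) ≤
      μ (iterMap f u ⁻¹' Set.Icc a B) := by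
  obtain ⟨haP, hBP, haB, hsep, hx⟩ := hΔ
  obtain ⟨hcP, hdP, hcd, hsep', -⟩ := hΔ'
  by_cases hL : iterMap f u 1 ≤ c
  · have hsub2 : iterMap f u ⁻¹' Set.Icc c d ⊆ Set.Ici 1 := by
      intro x hx'
      have h3 : iterMap f u 1 ≤ iterMap f u x := le_trans hL hx'.1
      exact (iterMap_le_iff hf hρ0 u).1 h3
    calc ENNReal.ofReal (pm ^ (m+1)) * μ (iterMap f u ⁻¹' Set.Icc c d)
        ≤ ENNReal.ofReal (pm ^ (m+1)) * μ (Set.Ici 1) :=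
          mul_le_mul_right (measure_mono hsub2) _
      _ = 0 := by rw [hIci1, mul_zero]
      _ ≤ _ := zero_le
  by_cases hR : d ≤ iterMap f u 0
  · have hsub2 : iterMap f u ⁻¹' Set.Icc c d ⊆ Set.Iic 0 := by
      intro x hx'
      have h3 : iterMap f u x ≤ iterMap f u 0 := le_trans hx'.2 hR
      exact (iterMap_le_iff hf hρ0 u).1 h3
    calc ENNReal.ofReal (pm ^ (m+1)) * μ (iterMap f u ⁻¹' Set.Icc c d)
        ≤ ENNReal.ofReal (pm ^ (m+1)) * μ (Set.Iic 0) :=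
          mul_le_mul_right (measure_mono hsub2) _
      _ = 0 := by rw [hIic0, mul_zero]
      _ ≤ _ := zero_le
  -- main case: [c,d] ⊆ f_u([0,1])
  have hu0c : iterMap f u 0 ≤ c :=
    (hsep' _ (mem_PnSet_word (n-1) u hulen (Or.inl rfl))).resolve_right hR
  have hu1d : d ≤ iterMap f u 1 :=
    (hsep' _ (mem_PnSet_word (n-1) u hulen (Or.inr rfl))).resolve_left hL
  obtain ⟨x, hxIoo, hxE⟩ := hx
  have hxab : x ∈ Set.Icc a B := ⟨hxIoo.1.le, hxIoo.2.le⟩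
  have hxcd := hsub hxab
  obtain ⟨z, hzE, hzx⟩ : ∃ z ∈ E, iterMap f u z = x := by
    rcases eq_or_ne u [] with rfl | hune
    · exact ⟨x, hxE, rfl⟩
    · have himg : x ∈ iterMap f u '' E := by
        rw [hTSS u hune]
        refine ⟨?_, hxE⟩
        rw [iterMap_image_Icc hf hρ0]
        exact ⟨le_trans hu0c hxcd.1, le_trans hxcd.2 hu1d⟩
      obtain ⟨z, hz, he⟩ := himg
      exact ⟨z, hz, he⟩
  have hzE' : z ∈ ⋃ i, f i '' E := by rw [← hE]; exact hzE
  obtain ⟨j, z', hz'E, hz'z⟩ := by simpa using hzE'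
  have hu'len : (u ++ [j]).length = n := by
    simp only [List.length_append, List.length_singleton, hulen]; omega
  have hu'x : iterMap f (u ++ [j]) z' = x := by
    rw [iterMap_append]
    simp only [iterMap, Function.comp_apply, id_eq]
    rw [hz'z, hzx]
  have hz'01 : z' ∈ Set.Icc (0:ℝ) 1 := hEsub hz'E
  have hu'0x : iterMap f (u ++ [j]) 0 ≤ x := by
    rw [← hu'x]; exact (iterMap_le_iff hf hρ0 _).2 hz'01.1
  have hu'1x : x ≤ iterMap f (u ++ [j]) 1 := by
    rw [← hu'x]; exact (iterMap_le_iff hf hρ0 _).2 hz'01.2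
  have hu'a : iterMap f (u ++ [j]) 0 ≤ a := by
    refine (hsep _ (mem_PnSet_word n (u ++ [j]) hu'len (Or.inl rfl))).resolve_right ?_
    intro h
    exact absurd (lt_of_le_of_lt (le_trans h hu'0x) hxIoo.2) (lt_irrefl _)
  have hu'B : B ≤ iterMap f (u ++ [j]) 1 := by
    refine (hsep _ (mem_PnSet_word n (u ++ [j]) hu'len (Or.inr rfl))).resolve_left ?_
    intro h
    exact absurd (lt_of_lt_of_le hxIoo.1 (le_trans hu'1x h)) (lt_irrefl _)
  have hone' : iterMap f (u ++ [j]) 1 = iterMap f (u ++ [j]) 0 + ρ ^ n := by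
    rw [iterMap_one hf, hu'len]
  have hρn : (0:ℝ) < ρ ^ n := pow_pos hρ0 n
  have hA'V := endpoint_ratio hf hρ0 Γ hΓ n hn a haP _ hu'len hu'a (by rw [← hone']; linarith)
  have hB'V := endpoint_ratio hf hρ0 Γ hΓ n hn B hBP _ hu'len (le_trans hu'a haB.le)
    (by rw [← hone']; linarith)
  have hz'eq : z' = (x - iterMap f (u ++ [j]) 0) / ρ ^ n := by
    have haff := iterMap_affine hf (u ++ [j]) z'
    rw [hu'len, hu'x] at haff
    field_simp [haff]
    linarith
  obtain ⟨η, hηlen, hηsub⟩ := hmH _ _ hA'V hB'V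
    (by rw [div_lt_div_iff₀ hρn hρn]; nlinarith)
    ⟨z', hz'E, by rw [hz'eq, div_lt_div_iff₀ hρn hρn]; nlinarith [hxIoo.1],
      by rw [hz'eq, div_lt_div_iff₀ hρn hρn]; nlinarith [hxIoo.2]⟩
  have hcontain : iterMap f (j :: η) '' Set.Icc 0 1 ⊆ iterMap f u ⁻¹' Set.Icc a B := by
    rintro _ ⟨x0, hx0, rfl⟩
    simp only [Set.mem_preimage]
    have h1 : iterMap f u (iterMap f (j :: η) x0) = iterMap f (u ++ [j]) (iterMap f η x0) := by
      rw [iterMap_append]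
      simp only [iterMap, Function.comp_apply, id_eq]
    rw [h1]
    have h2 : iterMap f η x0 ∈ Set.Icc ((a - iterMap f (u ++ [j]) 0) / ρ ^ n)
        ((B - iterMap f (u ++ [j]) 0) / ρ ^ n) := hηsub ⟨x0, hx0, rfl⟩
    have haff := iterMap_affine hf (u ++ [j]) (iterMap f η x0)
    rw [hu'len] at haff
    constructor
    · rw [haff]
      have h3 := h2.1
      rw [div_le_iff₀ hρn] at h3
      linarith
    · rw [haff]
      have h3 := h2.2
      rw [le_div_iff₀ hρn] at h3
      linarith
  have hmass : ENNReal.ofReal (pm ^ (m+1)) ≤ μ (iterMap f u ⁻¹' Set.Icc a B) := by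
    refine le_trans ?_ (measure_mono hcontain)
    refine le_trans ?_ (mass_piece hρ0 hf hμ hIcc (j :: η))
    calc ENNReal.ofReal (pm ^ (m+1)) = ENNReal.ofReal pm ^ (m+1) :=
          ENNReal.ofReal_pow hpm_pos.le _
      _ ≤ ENNReal.ofReal pm ^ (j :: η).length :=
          pow_le_pow_right_of_le_one' (ENNReal.ofReal_le_one.2 hpm_lt1.le)
            (by simp only [List.length_cons]; omega)
      _ = ∏ _k : Fin (j :: η).length, ENNReal.ofReal pm := by
          rw [Finset.prod_const, Finset.card_univ, Fintype.card_fin]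
      _ ≤ ∏ k, ENNReal.ofReal (p ((j :: η).get k)) :=
          Finset.prod_le_prod' fun k _ => ENNReal.ofReal_le_ofReal (hpm_le _)
  have prob_le : μ (iterMap f u ⁻¹' Set.Icc c d) ≤ 1 := by
    have h2 := measure_mono (μ := μ) (Set.subset_univ (iterMap f u ⁻¹' Set.Icc c d))
    simpa using h2
  calc ENNReal.ofReal (pm ^ (m+1)) * μ (iterMap f u ⁻¹' Set.Icc c d)
      ≤ ENNReal.ofReal (pm ^ (m+1)) * 1 := mul_le_mul_right prob_le _
    _ = ENNReal.ofReal (pm ^ (m+1)) := mul_one _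
    _ ≤ _ := hmass

lemma conc1_lemma
    (hf : ∀ i x, f i x = ρ * x + b i) (hρ0 : 0 < ρ)
    {E : Set ℝ} (hE : E = ⋃ i, f i '' E) (hEsub : E ⊆ Set.Icc 0 1)
    (hTSS : ∀ ω : List (Fin N), ω ≠ [] →
      iterMap f ω '' E = iterMap f ω '' Set.Icc 0 1 ∩ E)
    (hμ : μ = ∑ i, ENNReal.ofReal (p i) • μ.map (f i))
    (hIcc : μ (Set.Icc 0 1) = 1) (hIic0 : μ (Set.Iic 0) = 0) (hIci1 : μ (Set.Ici 1) = 0)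
    (Γ : Finset ℝ)
    (hΓ : ∀ n : ℕ, 1 ≤ n → ∀ σ ω : List (Fin N), σ.length = n → ω.length = n →
      |iterMap f σ 0 - iterMap f ω 0| / ρ ^ n ∈ Γ ∨
      1 < |iterMap f σ 0 - iterMap f ω 0| / ρ ^ n)
    (m : ℕ) (pm : ℝ) (hpm_pos : 0 < pm) (hpm_lt1 : pm < 1) (hpm_le : ∀ i, pm ≤ p i)
    (hmH : ∀ A' B' : ℝ, (∃ g ∈ Γ, A' = g ∨ A' = 1 - g) → (∃ g ∈ Γ, B' = g ∨ B' = 1 - g) →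
      A' < B' → (E ∩ Set.Ioo A' B').Nonempty →
      ∃ w : List (Fin N), w.length ≤ m ∧ iterMap f w '' Set.Icc 0 1 ⊆ Set.Icc A' B')
    (n : ℕ) (hn : 1 ≤ n) (a B c d : ℝ) (hΔ : IsNetInterval f E n a B)
    (hΔ' : IsNetInterval f E (n-1) c d) (hsub : Set.Icc a B ⊆ Set.Icc c d) :
    ENNReal.ofReal (pm ^ (m+1)) * μ (Set.Icc c d) ≤ μ (Set.Icc a B) := by
  have h1 := measure_iter hf μ hμ (n-1) (A := Set.Icc c d) measurableSet_Icc
  have h2 := measure_iter hf μ hμ (n-1) (A := Set.Icc a B) measurableSet_Icc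
  rw [h1, h2, Finset.mul_sum]
  refine Finset.sum_le_sum fun v _ => ?_
  rw [← mul_assoc, mul_comm (ENNReal.ofReal (pm ^ (m+1))) _, mul_assoc]
  exact mul_le_mul_right
    (term_lemma hf hρ0 hE hEsub hTSS hμ hIcc hIic0 hIci1 Γ hΓ m pm hpm_pos hpm_lt1 hpm_le hmH
      n hn a B c d hΔ hΔ' hsub (List.ofFn v) (by simp)) _

end M

theorem stmt1
    (N : ℕ) (hN : 2 ≤ N) (ρ : ℝ) (hρ : ρ ∈ Set.Ioo (0 : ℝ) 1)
    (b : Fin N → ℝ) (hb : StrictMono b)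
    (hb0 : b ⟨0, by omega⟩ = 0) (hbN : b ⟨N - 1, by omega⟩ = 1 - ρ)
    (f : Fin N → ℝ → ℝ) (hf : ∀ i x, f i x = ρ * x + b i)
    (E : Set ℝ) (hEcpt : IsCompact E) (hEne : E.Nonempty)
    (hE : E = ⋃ i, f i '' E)
    -- finite-type condition
    (hFTC : ∃ Γ : Finset ℝ, ∀ n : ℕ, 1 ≤ n → ∀ σ ω : List (Fin N),
      σ.length = n → ω.length = n →
        |iterMap f σ 0 - iterMap f ω 0| / ρ ^ n ∈ Γ ∨
        1 < |iterMap f σ 0 - iterMap f ω 0| / ρ ^ n)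
    -- total self-similarity of E
    (hTSS : ∀ ω : List (Fin N), ω ≠ [] →
      iterMap f ω '' E = iterMap f ω '' Set.Icc 0 1 ∩ E)
    -- the self-similar measure associated with a positive probability vector
    (p : Fin N → ℝ) (hp : ∀ i, 0 < p i) (hp1 : ∑ i, p i = 1)
    (μ : Measure ℝ) [IsProbabilityMeasure μ]
    (hμ : μ = ∑ i, ENNReal.ofReal (p i) • μ.map (f i)) :
    ∃ C : ℝ, C ∈ Set.Ioo (0 : ℝ) 1 ∧
      (∀ n : ℕ, 1 ≤ n → ∀ a b' c d : ℝ,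
        IsNetInterval f E n a b' → IsNetInterval f E (n - 1) c d →
        Set.Icc a b' ⊆ Set.Icc c d →
        ENNReal.ofReal C * μ (Set.Icc c d) ≤ μ (Set.Icc a b')) ∧
      (∀ n : ℕ, ∀ a b' : ℝ, IsNetInterval f E n a b' →
        ENNReal.ofReal (C ^ n) ≤ μ (Set.Icc a b')) := by
  classical
  obtain ⟨Γ, hΓ⟩ := hFTC
  set i0 : Fin N := ⟨0, by omega⟩ with hi0def
  set iN : Fin N := ⟨N - 1, by omega⟩ with hiNdef
  have hρ0 : (0:ℝ) < ρ := hρ.1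
  have hρ1 : ρ < 1 := hρ.2
  -- basic facts about b
  have hbl : ∀ i, 0 ≤ b i := by
    intro i
    have h : i0 ≤ i := by rw [Fin.le_def]; exact Nat.zero_le _
    calc (0:ℝ) = b i0 := hb0.symm
      _ ≤ b i := hb.monotone h
  have hbu : ∀ i, b i ≤ 1 - ρ := by
    intro i
    have h : i ≤ iN := by rw [Fin.le_def]; have := i.2; simp only [hiNdef]; omega
    calc b i ≤ b iN := hb.monotone h
      _ = 1 - ρ := hbN
  have hbpos : ∀ i, i ≠ i0 → 0 < b i := by
    intro i hi
    have h : i0 < i := by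
      rw [Fin.lt_def]
      rcases Nat.eq_zero_or_pos i.1 with h | h
      · exact absurd (Fin.ext h : i = i0) hi
      · exact h
    calc (0:ℝ) = b i0 := hb0.symm
      _ < b i := hb h
  have hblt : ∀ i, i ≠ iN → b i < 1 - ρ := by
    intro i hi
    have h : i < iN := by
      rw [Fin.lt_def]
      have h2 := i.2
      rcases Nat.lt_or_ge i.1 (N-1) with h | h
      · exact h
      · exact absurd (Fin.ext (by simp only [hiNdef]; omega) : i = iN) hi
    calc b i < b iN := hb h
      _ = 1 - ρ := hbN
  have hi0N : i0 ≠ iN := by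
    intro h
    have := congrArg Fin.val h
    simp only [hi0def, hiNdef] at this
    omega
  -- probabilities < 1
  have hp_lt1 : ∀ i, p i < 1 := by
    intro i
    obtain ⟨j, hij⟩ : ∃ j, j ≠ i := by
      rcases eq_or_ne i i0 with rfl | h
      · exact ⟨iN, Ne.symm hi0N⟩
      · exact ⟨i0, Ne.symm h⟩
    have hpair : p j + p i ≤ ∑ k, p k := by
      have := Finset.sum_le_sum_of_subset_of_nonneg
        (Finset.subset_univ ({j, i} : Finset (Fin N))) (fun k _ _ => (hp k).le)
      rwa [Finset.sum_pair hij] at this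
    rw [hp1] at hpair
    have := hp j
    linarith
  -- f i0 fixes 0, f iN fixes 1
  have hfi0 : f i0 0 = 0 := by rw [hf, hb0]; ring
  have hfiN : f iN 1 = 1 := by rw [hf, hbN]; ring
  -- E ⊆ [0,1]
  have hEsub : E ⊆ Set.Icc 0 1 := by
    have hbdd : BddAbove E := hEcpt.bddAbove
    have hbddb : BddBelow E := hEcpt.bddBelow
    have hsup1 : sSup E ≤ 1 := by
      have hmem : sSup E ∈ ⋃ i, f i '' E := by rw [← hE]; exact hEcpt.sSup_mem hEne
      obtain ⟨i, z, hz, hzeq⟩ := by simpa using hmem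
      have hzle : z ≤ sSup E := le_csSup hbdd hz
      rw [hf] at hzeq
      have := hbu i
      nlinarith
    have hinf0 : 0 ≤ sInf E := by
      have hmem : sInf E ∈ ⋃ i, f i '' E := by rw [← hE]; exact hEcpt.sInf_mem hEne
      obtain ⟨i, z, hz, hzeq⟩ := by simpa using hmem
      have hzle : sInf E ≤ z := csInf_le hbddb hz
      rw [hf] at hzeq
      have := hbl i
      nlinarith
    intro x hx
    exact ⟨le_trans hinf0 (csInf_le hbddb hx), le_trans (le_csSup hbdd hx) hsup1⟩
  -- measure support lemmas
  have hIio : μ (Set.Iio 0) = 0 := mu_Iio_zero hρ hf hbl hp hp1 hμ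
  have hIoi : μ (Set.Ioi 1) = 0 := mu_Ioi_one hρ hf hbu hp hp1 hμ
  have h0 : μ {(0:ℝ)} = 0 := mu_atom0 hρ hf i0 hb0 hbpos (hp_lt1 i0) hp hμ hIio
  have h1 : μ {(1:ℝ)} = 0 := mu_atom1 hρ hf iN hbN hblt (hp_lt1 iN) hp hμ hIoi
  have hIcc : μ (Set.Icc 0 1) = 1 := mu_Icc01 hIio hIoi
  have hIic0 : μ (Set.Iic 0) = 0 := mu_Iic0 hIio h0
  have hIci1 : μ (Set.Ici 1) = 0 := mu_Ici1 hIoi h1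
  -- minimal probability
  haveI : Nonempty (Fin N) := ⟨i0⟩
  obtain ⟨pm, hpm_pos, hpm_le, hpm_lt1⟩ : ∃ pm : ℝ, 0 < pm ∧ (∀ i, pm ≤ p i) ∧ pm < 1 := by
    refine ⟨(Finset.univ.image p).min' (Finset.image_nonempty.2 Finset.univ_nonempty), ?_, ?_, ?_⟩
    · obtain ⟨i, _, hi⟩ := Finset.mem_image.1
        ((Finset.univ.image p).min'_mem (Finset.image_nonempty.2 Finset.univ_nonempty))
      rw [← hi]
      exact hp i
    · exact fun i => Finset.min'_le _ _ (Finset.mem_image_of_mem p (Finset.mem_univ i))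
    · exact lt_of_le_of_lt
        (Finset.min'_le _ _ (Finset.mem_image_of_mem p (Finset.mem_univ i0))) (hp_lt1 i0)
  -- a uniform bound on the lengths of covering words
  obtain ⟨m, hmH⟩ : ∃ m : ℕ, ∀ A' B' : ℝ,
      (∃ g ∈ Γ, A' = g ∨ A' = 1 - g) → (∃ g ∈ Γ, B' = g ∨ B' = 1 - g) →
      A' < B' → (E ∩ Set.Ioo A' B').Nonempty →
      ∃ w : List (Fin N), w.length ≤ m ∧ iterMap f w '' Set.Icc 0 1 ⊆ Set.Icc A' B' := by
    have hVfin : (↑Γ ∪ (fun g : ℝ => 1 - g) '' ↑Γ : Set ℝ).Finite :=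
      Γ.finite_toSet.union (Γ.finite_toSet.image _)
    have hTfin : {q : ℝ × ℝ | (q.1 ∈ (↑Γ ∪ (fun g : ℝ => 1 - g) '' ↑Γ : Set ℝ)) ∧
        (q.2 ∈ (↑Γ ∪ (fun g : ℝ => 1 - g) '' ↑Γ : Set ℝ)) ∧ q.1 < q.2 ∧
        (E ∩ Set.Ioo q.1 q.2).Nonempty}.Finite :=
      Set.Finite.subset (hVfin.prod hVfin) (fun q hq => ⟨hq.1, hq.2.1⟩)
    have key_exists : ∀ q ∈ {q : ℝ × ℝ | (q.1 ∈ (↑Γ ∪ (fun g : ℝ => 1 - g) '' ↑Γ : Set ℝ)) ∧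
        (q.2 ∈ (↑Γ ∪ (fun g : ℝ => 1 - g) '' ↑Γ : Set ℝ)) ∧ q.1 < q.2 ∧
        (E ∩ Set.Ioo q.1 q.2).Nonempty}, ∃ w : List (Fin N),
        iterMap f w '' Set.Icc 0 1 ⊆ Set.Icc q.1 q.2 := by
      rintro ⟨u, v⟩ ⟨-, -, huv, y, hyE, hy1, hy2⟩
      have hδ : 0 < min (y - u) (v - y) := lt_min (by linarith) (by linarith)
      obtain ⟨ℓ, hℓ⟩ := exists_pow_lt_of_lt_one hδ hρ1
      obtain ⟨w, hwlen, z, hzE, hzy⟩ := exists_word_cover E hE ℓ y hyE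
      refine ⟨w, ?_⟩
      rw [iterMap_image_Icc hf hρ0]
      have hz01 := hEsub hzE
      have hwy1 : iterMap f w 0 ≤ y := by
        rw [← hzy]
        exact (iterMap_le_iff hf hρ0 w).2 hz01.1
      have hwy2 : y ≤ iterMap f w 1 := by
        rw [← hzy]
        exact (iterMap_le_iff hf hρ0 w).2 hz01.2
      have hone := iterMap_one hf (b := b) w
      rw [hwlen] at hone
      have hmin1 : ρ ^ ℓ < y - u := lt_of_lt_of_le hℓ (min_le_left _ _)
      have hmin2 : ρ ^ ℓ < v - y := lt_of_lt_of_le hℓ (min_le_right _ _)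
      exact Set.Icc_subset_Icc (by nlinarith) (by nlinarith)
    choose! w hw using key_exists
    obtain ⟨m, hmub⟩ := (hTfin.image fun q => (w q).length).bddAbove
    refine ⟨m, fun A' B' hA' hB' hlt hne => ?_⟩
    have hA'mem : A' ∈ (↑Γ ∪ (fun g : ℝ => 1 - g) '' ↑Γ : Set ℝ) := by
      obtain ⟨g, hg, h | h⟩ := hA'
      · exact Or.inl (h ▸ hg)
      · exact Or.inr ⟨g, hg, h.symm⟩
    have hB'mem : B' ∈ (↑Γ ∪ (fun g : ℝ => 1 - g) '' ↑Γ : Set ℝ) := by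
      obtain ⟨g, hg, h | h⟩ := hB'
      · exact Or.inl (h ▸ hg)
      · exact Or.inr ⟨g, hg, h.symm⟩
    have hqT : ((A', B') : ℝ × ℝ) ∈ {q : ℝ × ℝ |
        (q.1 ∈ (↑Γ ∪ (fun g : ℝ => 1 - g) '' ↑Γ : Set ℝ)) ∧
        (q.2 ∈ (↑Γ ∪ (fun g : ℝ => 1 - g) '' ↑Γ : Set ℝ)) ∧ q.1 < q.2 ∧
        (E ∩ Set.Ioo q.1 q.2).Nonempty} := ⟨hA'mem, hB'mem, hlt, hne⟩
    exact ⟨w (A', B'), hmub (Set.mem_image_of_mem _ hqT), hw (A', B') hqT⟩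
  -- trivial memberships of 0 and 1 in every P_n
  have hzeroP : ∀ n, (0:ℝ) ∈ PnSet f n := fun n => zero_mem_PnSet ⟨i0, hfi0⟩ n
  have honeP : ∀ n, (1:ℝ) ∈ PnSet f n := fun n => one_mem_PnSet ⟨iN, hfiN⟩ n
  have hPsub : ∀ n, PnSet f n ⊆ Set.Icc (0:ℝ) 1 := by
    rintro n x ⟨σ, hlen, h | h⟩
    · rw [← h]
      exact iterMap_maps_Icc hf hρ0 hbl hbu σ 0 ⟨le_refl 0, by norm_num⟩
    · rw [← h]
      exact iterMap_maps_Icc hf hρ0 hbl hbu σ 1 ⟨by norm_num, le_refl 1⟩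
  have conc1 : ∀ n : ℕ, 1 ≤ n → ∀ a B c d : ℝ,
      IsNetInterval f E n a B → IsNetInterval f E (n - 1) c d →
      Set.Icc a B ⊆ Set.Icc c d →
      ENNReal.ofReal (pm ^ (m+1)) * μ (Set.Icc c d) ≤ μ (Set.Icc a B) :=
    fun n hn a B c d hΔ hΔ' hsub =>
      conc1_lemma hf hρ0 hE hEsub hTSS hμ hIcc hIic0 hIci1 Γ hΓ m pm hpm_pos hpm_lt1 hpm_le hmH
        n hn a B c d hΔ hΔ' hsub
  refine ⟨pm ^ (m+1), ⟨pow_pos hpm_pos _, pow_lt_one₀ hpm_pos.le hpm_lt1 (Nat.succ_ne_zero m)⟩,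
    conc1, ?_⟩
  -- second conclusion, by induction
  intro n
  induction n with
  | zero =>
    intro a B hΔ
    obtain ⟨haP, hBP, haB, -, -⟩ := hΔ
    have ha : a = 0 ∨ a = 1 := by
      obtain ⟨σ, hσ, h⟩ := haP
      have hσnil : σ = [] := List.length_eq_zero_iff.1 hσ
      subst hσnil
      rcases h with h | h
      · exact Or.inl h.symm
      · exact Or.inr h.symm
    have hB : B = 0 ∨ B = 1 := by
      obtain ⟨σ, hσ, h⟩ := hBP
      have hσnil : σ = [] := List.length_eq_zero_iff.1 hσ
      subst hσnil
      rcases h with h | h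
      · exact Or.inl h.symm
      · exact Or.inr h.symm
    have hab01 : a = 0 ∧ B = 1 := by
      rcases ha with rfl | rfl <;> rcases hB with rfl | rfl
      · exact absurd haB (lt_irrefl _)
      · exact ⟨rfl, rfl⟩
      · linarith
      · exact absurd haB (lt_irrefl _)
    rw [hab01.1, hab01.2, pow_zero, ENNReal.ofReal_one, hIcc]
  | succ k ih =>
    intro a B hΔ
    obtain ⟨haP, hBP, haB, hsep, hxne⟩ := hΔ
    have hPfin := PnSet_finite (f := f) k
    have ha01 := hPsub (k+1) haP
    have hB01 := hPsub (k+1) hBP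
    have hS1fin : ({y | y ∈ PnSet f k ∧ y ≤ a} : Set ℝ).Finite :=
      hPfin.subset fun y hy => hy.1
    have hS1ne : ({y | y ∈ PnSet f k ∧ y ≤ a} : Set ℝ).Nonempty :=
      ⟨0, hzeroP k, ha01.1⟩
    have hS2fin : ({y | y ∈ PnSet f k ∧ B ≤ y} : Set ℝ).Finite :=
      hPfin.subset fun y hy => hy.1
    have hS2ne : ({y | y ∈ PnSet f k ∧ B ≤ y} : Set ℝ).Nonempty :=
      ⟨1, honeP k, hB01.2⟩
    obtain ⟨c, hcS1, hcub⟩ : ∃ c, c ∈ ({y | y ∈ PnSet f k ∧ y ≤ a} : Set ℝ) ∧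
        ∀ y ∈ ({y | y ∈ PnSet f k ∧ y ≤ a} : Set ℝ), y ≤ c := by
      refine ⟨hS1fin.toFinset.max' (by rwa [Set.Finite.toFinset_nonempty]), ?_, ?_⟩
      · have := hS1fin.toFinset.max'_mem (by rwa [Set.Finite.toFinset_nonempty])
        rwa [Set.Finite.mem_toFinset] at this
      · exact fun y hy => Finset.le_max' _ _ (hS1fin.mem_toFinset.2 hy)
    obtain ⟨d, hdS2, hdlb⟩ : ∃ d, d ∈ ({y | y ∈ PnSet f k ∧ B ≤ y} : Set ℝ) ∧
        ∀ y ∈ ({y | y ∈ PnSet f k ∧ B ≤ y} : Set ℝ), d ≤ y := by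
      refine ⟨hS2fin.toFinset.min' (by rwa [Set.Finite.toFinset_nonempty]), ?_, ?_⟩
      · have := hS2fin.toFinset.min'_mem (by rwa [Set.Finite.toFinset_nonempty])
        rwa [Set.Finite.mem_toFinset] at this
      · exact fun y hy => Finset.min'_le _ _ (hS2fin.mem_toFinset.2 hy)
    have hparent : IsNetInterval f E k c d := by
      refine ⟨hcS1.1, hdS2.1, ?_, ?_, ?_⟩
      · exact lt_of_le_of_lt hcS1.2 (lt_of_lt_of_le haB hdS2.2)
      · intro y hyP
        by_cases hya : y ≤ a
        · exact Or.inl (hcub y ⟨hyP, hya⟩)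
        · have hmem := hsep y (PnSet_mono ⟨i0, hfi0⟩ ⟨iN, hfiN⟩ k hyP)
          rcases hmem with h | h
          · exact absurd h hya
          · exact Or.inr (hdlb y ⟨hyP, h⟩)
      · obtain ⟨x, hxIoo, hxE⟩ := hxne
        exact ⟨x, ⟨lt_of_le_of_lt hcS1.2 hxIoo.1, lt_of_lt_of_le hxIoo.2 hdS2.2⟩, hxE⟩
    have hIccsub : Set.Icc a B ⊆ Set.Icc c d := Set.Icc_subset_Icc hcS1.2 hdS2.2
    have hc1 := conc1 (k+1) (Nat.le_add_left 1 k) a B c d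
      ⟨haP, hBP, haB, hsep, hxne⟩ hparent hIccsub
    calc ENNReal.ofReal ((pm ^ (m+1)) ^ (k+1))
        = ENNReal.ofReal (pm ^ (m+1) * (pm ^ (m+1)) ^ k) := by rw [pow_succ']
      _ = ENNReal.ofReal (pm ^ (m+1)) * ENNReal.ofReal ((pm ^ (m+1)) ^ k) :=
          ENNReal.ofReal_mul (by positivity)
      _ ≤ ENNReal.ofReal (pm ^ (m+1)) * μ (Set.Icc c d) :=
          mul_le_mul_right (ih c d hparent) _
      _ ≤ μ (Set.Icc a B) := hc1
end

section
/- Let μ be a Borel probability measure on ℝ, r ∈ (0,∞), ρ ∈ (0,1), C₂ ∈ (0,1], C₃ ∈ (0,1), and s₀ ∈ ℕ. Let T be a nonempty set of finite words over a finite alphabet that is closed under taking prefixes and contains the empty word, and let each σ ∈ T be assigned a closed bounded interval I_σ ⊆ ℝ such that: (i) every σ ∈ T has at least one extension σ∗j ∈ T by one letter, and I_{σ∗j} ⊆ I_σ for every such extension; (ii) for distinct words of the same length the corresponding intervals have disjoint interiors; (iii) C₂ρ^{|σ|} ≤ |I_σ| ≤ C₂^{−1}ρ^{|σ|} for every σ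 ∈ T, where |I_σ| denotes the length of I_σ and |σ| the length of σ; (iv) μ(I_{σ∗j}) ≥ C₃μ(I_σ) for every σ∗j ∈ T; (v) every σ ∈ T has at least two distinct extensions in T of length |σ| + s₀. Then for every L ∈ ℕ there exists a constant Z_L > 0, depending only on L, r, ρ, C₂, C₃, s₀, such that for every σ ∈ T and every finite set B ⊂ ℝ with card(B) ≤ L, ∫_{I_σ} d(x,B)^r dμ(x) ≥ Z_L · μ(I_σ) · |I_σ|^r, where d(x,B) = min_{b∈B}|x−b|. -/
open MeasureTheory Set
open scoped ENNReal

private lemma sep_intervals {a₁ b₁ a₂ b₂ ℓ : ℝ} (hℓ : 0 < ℓ)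
    (h₂ : ℓ ≤ b₂ - a₂)
    (hd : Set.Ioo a₁ b₁ ∩ Set.Ioo a₂ b₂ = ∅) (hlt : a₁ < a₂) : b₁ ≤ a₂ := by
  by_contra h
  push_neg at h
  have hm : a₂ < min b₁ b₂ := lt_min h (by linarith)
  have h1 := min_le_left b₁ b₂
  have h2 := min_le_right b₁ b₂
  have hmem : (a₂ + min b₁ b₂) / 2 ∈ Set.Ioo a₁ b₁ ∩ Set.Ioo a₂ b₂ :=
    ⟨⟨by linarith, by linarith⟩, ⟨by linarith, by linarith⟩⟩
  rw [hd] at hmem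
  exact hmem

private lemma ne_left_intervals {a₁ b₁ a₂ b₂ ℓ : ℝ} (hℓ : 0 < ℓ)
    (h₁ : ℓ ≤ b₁ - a₁) (h₂ : ℓ ≤ b₂ - a₂)
    (hd : Set.Ioo a₁ b₁ ∩ Set.Ioo a₂ b₂ = ∅) : a₁ ≠ a₂ := by
  intro h
  subst h
  have hm : a₁ < min b₁ b₂ := lt_min (by linarith) (by linarith)
  have h1 := min_le_left b₁ b₂
  have h2 := min_le_right b₁ b₂
  have hmem : (a₁ + min b₁ b₂) / 2 ∈ Set.Ioo a₁ b₁ ∩ Set.Ioo a₁ b₂ :=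
    ⟨⟨by linarith, by linarith⟩, ⟨by linarith, by linarith⟩⟩
  rw [hd] at hmem
  exact hmem

private lemma three_intervals {u₁ v₁ u₂ v₂ u₃ v₃ b ℓ : ℝ} (hℓ : 0 < ℓ)
    (h₁ : ℓ ≤ v₁ - u₁) (h₂ : ℓ ≤ v₂ - u₂) (h₃ : ℓ ≤ v₃ - u₃)
    (d₁₂ : Set.Ioo u₁ v₁ ∩ Set.Ioo u₂ v₂ = ∅)
    (d₁₃ : Set.Ioo u₁ v₁ ∩ Set.Ioo u₃ v₃ = ∅)
    (d₂₃ : Set.Ioo u₂ v₂ ∩ Set.Ioo u₃ v₃ = ∅)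
    (n₁ : u₁ < b + ℓ/4 ∧ b - ℓ/4 < v₁)
    (n₂ : u₂ < b + ℓ/4 ∧ b - ℓ/4 < v₂)
    (n₃ : u₃ < b + ℓ/4 ∧ b - ℓ/4 < v₃) : False := by
  have d₂₁ : Set.Ioo u₂ v₂ ∩ Set.Ioo u₁ v₁ = ∅ := by rw [Set.inter_comm]; exact d₁₂
  have d₃₁ : Set.Ioo u₃ v₃ ∩ Set.Ioo u₁ v₁ = ∅ := by rw [Set.inter_comm]; exact d₁₃
  have d₃₂ : Set.Ioo u₃ v₃ ∩ Set.Ioo u₂ v₂ = ∅ := by rw [Set.inter_comm]; exact d₂₃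
  rcases lt_trichotomy u₁ u₂ with h12 | h12 | h12
  · rcases lt_trichotomy u₂ u₃ with h23 | h23 | h23
    · have o1 := sep_intervals hℓ h₂ d₁₂ h12
      have o2 := sep_intervals hℓ h₃ d₂₃ h23
      linarith [n₁.2, n₃.1]
    · exact ne_left_intervals hℓ h₂ h₃ d₂₃ h23
    · rcases lt_trichotomy u₁ u₃ with h13 | h13 | h13
      · have o1 := sep_intervals hℓ h₃ d₁₃ h13
        have o2 := sep_intervals hℓ h₂ d₃₂ h23
        linarith [n₁.2, n₂.1]
      · exact ne_left_intervals hℓ h₁ h₃ d₁₃ h13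
      · have o1 := sep_intervals hℓ h₁ d₃₁ h13
        have o2 := sep_intervals hℓ h₂ d₁₂ h12
        linarith [n₃.2, n₂.1]
  · exact ne_left_intervals hℓ h₁ h₂ d₁₂ h12
  · rcases lt_trichotomy u₁ u₃ with h13 | h13 | h13
    · have o1 := sep_intervals hℓ h₁ d₂₁ h12
      have o2 := sep_intervals hℓ h₃ d₁₃ h13
      linarith [n₂.2, n₃.1]
    · exact ne_left_intervals hℓ h₁ h₃ d₁₃ h13
    · rcases lt_trichotomy u₂ u₃ with h23 | h23 | h23
      · have o1 := sep_intervals hℓ h₃ d₂₃ h23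
        have o2 := sep_intervals hℓ h₁ d₃₁ h13
        linarith [n₂.2, n₁.1]
      · exact ne_left_intervals hℓ h₂ h₃ d₂₃ h23
      · have o1 := sep_intervals hℓ h₂ d₃₂ h23
        have o2 := sep_intervals hℓ h₁ d₂₁ h12
        linarith [n₃.2, n₁.1]

theorem stmt5
    (μ : Measure ℝ) [IsProbabilityMeasure μ]
    (r ρ C₂ C₃ : ℝ) (hr : 0 < r) (hρ : ρ ∈ Set.Ioo (0 : ℝ) 1)
    (hC₂ : C₂ ∈ Set.Ioc (0 : ℝ) 1) (hC₃ : C₃ ∈ Set.Ioo (0 : ℝ) 1) (s₀ : ℕ)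
    (A : Type) [Fintype A]
    (T : Set (List A)) (hTnil : [] ∈ T)
    (hTpref : ∀ σ ∈ T, ∀ τ : List A, τ <+: σ → τ ∈ T)
    -- the interval `I_σ` is `[u σ, v σ]`
    (u v : List A → ℝ)
    -- (i) every word of `T` has an extension by one letter, and intervals nest
    (hext : ∀ σ ∈ T, ∃ j : A, σ ++ [j] ∈ T)
    (hnest : ∀ σ ∈ T, ∀ j : A, σ ++ [j] ∈ T →
      Set.Icc (u (σ ++ [j])) (v (σ ++ [j])) ⊆ Set.Icc (u σ) (v σ))
    -- (ii) intervals of distinct words of the same length have disjoint interiors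
    (hdisj : ∀ σ ∈ T, ∀ τ ∈ T, σ.length = τ.length → σ ≠ τ →
      Set.Ioo (u σ) (v σ) ∩ Set.Ioo (u τ) (v τ) = ∅)
    -- (iii) `C₂ ρ^{|σ|} ≤ |I_σ| ≤ C₂⁻¹ ρ^{|σ|}`
    (hlen : ∀ σ ∈ T, C₂ * ρ ^ σ.length ≤ v σ - u σ ∧ v σ - u σ ≤ C₂⁻¹ * ρ ^ σ.length)
    -- (iv) `μ(I_{σ∗j}) ≥ C₃ μ(I_σ)`
    (hher : ∀ σ ∈ T, ∀ j : A, σ ++ [j] ∈ T →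
      ENNReal.ofReal C₃ * μ (Set.Icc (u σ) (v σ)) ≤
        μ (Set.Icc (u (σ ++ [j])) (v (σ ++ [j]))))
    -- (v) every word of `T` has at least two extensions in `T` of length `|σ| + s₀`
    (hbranch : ∀ σ ∈ T, ∃ τ₁ ∈ T, ∃ τ₂ ∈ T, σ <+: τ₁ ∧ σ <+: τ₂ ∧ τ₁ ≠ τ₂ ∧
      τ₁.length = σ.length + s₀ ∧ τ₂.length = σ.length + s₀) :
    ∀ L : ℕ, ∃ Z : ℝ, 0 < Z ∧ ∀ σ ∈ T, ∀ B : Finset ℝ, B.Nonempty → B.card ≤ L →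
      Z * (μ (Set.Icc (u σ) (v σ))).toReal * (v σ - u σ) ^ r ≤
        ∫ x in Set.Icc (u σ) (v σ), (Metric.infDist x (B : Set ℝ)) ^ r ∂μ := by
  classical
  obtain ⟨hρ0, hρ1⟩ := hρ
  obtain ⟨hC₂0, hC₂1⟩ := hC₂
  obtain ⟨hC₃0, hC₃1⟩ := hC₃
  choose! e₁ he₁T e₂ he₂T hp₁ hp₂ hne hl₁ hl₂ using hbranch
  -- branching: 2^m descendants at depth m*s₀
  have hS : ∀ σ ∈ T, ∀ m : ℕ, ∃ S : Finset (List A),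
      (∀ τ ∈ S, τ ∈ T ∧ σ <+: τ ∧ τ.length = σ.length + m * s₀) ∧ 2 ^ m ≤ S.card := by
    intro σ hσ m
    induction m with
    | zero =>
      exact ⟨{σ}, by simp [hσ, List.prefix_refl], by simp⟩
    | succ m ih =>
      obtain ⟨S, hSmem, hScard⟩ := ih
      have hprop : ∀ τ ∈ S, ∀ w ∈ ({e₁ τ, e₂ τ} : Finset (List A)),
          w ∈ T ∧ τ <+: w ∧ w.length = τ.length + s₀ := by
        intro τ hτ w hw
        have hτT := (hSmem τ hτ).1
        rcases Finset.mem_insert.mp hw with h | h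
        · subst h; exact ⟨he₁T τ hτT, hp₁ τ hτT, hl₁ τ hτT⟩
        · have := Finset.mem_singleton.mp h; subst this
          exact ⟨he₂T τ hτT, hp₂ τ hτT, hl₂ τ hτT⟩
      have hdisjp : ∀ τ₁ ∈ S, ∀ τ₂ ∈ S, τ₁ ≠ τ₂ →
          Disjoint ({e₁ τ₁, e₂ τ₁} : Finset (List A)) {e₁ τ₂, e₂ τ₂} := by
        intro τ₁ hτ₁ τ₂ hτ₂ hneq
        rw [Finset.disjoint_left]
        intro w hw₁ hw₂
        obtain ⟨_, hpre₁, _⟩ := hprop τ₁ hτ₁ w hw₁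
        obtain ⟨_, hpre₂, _⟩ := hprop τ₂ hτ₂ w hw₂
        have hlen12 : τ₁.length = τ₂.length := by
          rw [(hSmem τ₁ hτ₁).2.2, (hSmem τ₂ hτ₂).2.2]
        exact hneq ((List.prefix_of_prefix_length_le hpre₁ hpre₂ hlen12.le).eq_of_length hlen12)
      refine ⟨S.biUnion (fun τ => {e₁ τ, e₂ τ}), ?_, ?_⟩
      · intro w hw
        obtain ⟨τ, hτ, hwτ⟩ := Finset.mem_biUnion.mp hw
        obtain ⟨hwT, hpre, hwlen⟩ := hprop τ hτ w hwτ
        obtain ⟨hτT, hτpre, hτlen⟩ := hSmem τ hτ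
        refine ⟨hwT, hτpre.trans hpre, ?_⟩
        rw [hwlen, hτlen]; ring
      · rw [Finset.card_biUnion hdisjp]
        have : ∀ τ ∈ S, ({e₁ τ, e₂ τ} : Finset (List A)).card = 2 := by
          intro τ hτ
          exact Finset.card_pair (hne τ (hSmem τ hτ).1)
        calc 2 ^ (m + 1) = 2 ^ m * 2 := by ring
          _ ≤ S.card * 2 := Nat.mul_le_mul_right 2 hScard
          _ = ∑ τ ∈ S, 2 := by rw [Finset.sum_const, smul_eq_mul, Nat.mul_comm]
          _ = ∑ τ ∈ S, ({e₁ τ, e₂ τ} : Finset (List A)).card :=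
              (Finset.sum_congr rfl this).symm
  -- descent: nesting and measure lower bound along prefixes
  have hdesc : ∀ n : ℕ, ∀ τ ∈ T, ∀ σ' : List A, σ' <+: τ → τ.length = σ'.length + n →
      Set.Icc (u τ) (v τ) ⊆ Set.Icc (u σ') (v σ') ∧
      ENNReal.ofReal (C₃ ^ n) * μ (Set.Icc (u σ') (v σ')) ≤ μ (Set.Icc (u τ) (v τ)) := by
    intro n
    induction n with
    | zero =>
      intro τ hτ σ' hpre hlen'
      have : σ' = τ := hpre.eq_of_length (by omega)
      subst this
      simp
    | succ n ih =>
      intro τ hτ σ' hpre hlen'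
      have hτne : τ ≠ [] := by
        intro h; rw [h] at hlen'; simp only [List.length_nil] at hlen'; omega
      have hid : τ.dropLast ++ [τ.getLast hτne] = τ := List.dropLast_append_getLast hτne
      have hτ'pre : τ.dropLast <+: τ := List.dropLast_prefix τ
      have hτ'T : τ.dropLast ∈ T := hTpref τ hτ _ hτ'pre
      have hτ'len : τ.dropLast.length = σ'.length + n := by
        rw [List.length_dropLast]; omega
      have hpre' : σ' <+: τ.dropLast :=
        List.prefix_of_prefix_length_le hpre hτ'pre (by omega)
      obtain ⟨hsub, hmeas⟩ := ih τ.dropLast hτ'T σ' hpre' hτ'len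
      have hj : τ.dropLast ++ [τ.getLast hτne] ∈ T := by rw [hid]; exact hτ
      have h1 := hnest τ.dropLast hτ'T _ hj
      have h2 := hher τ.dropLast hτ'T _ hj
      rw [hid] at h1 h2
      constructor
      · exact h1.trans hsub
      · calc ENNReal.ofReal (C₃ ^ (n + 1)) * μ (Set.Icc (u σ') (v σ'))
            = ENNReal.ofReal C₃ * (ENNReal.ofReal (C₃ ^ n) * μ (Set.Icc (u σ') (v σ'))) := by
              rw [pow_succ, ENNReal.ofReal_mul (pow_nonneg hC₃0.le n)]; ring
          _ ≤ ENNReal.ofReal C₃ * μ (Set.Icc (u τ.dropLast) (v τ.dropLast)) :=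
              mul_le_mul_right hmeas _
          _ ≤ μ (Set.Icc (u τ) (v τ)) := h2
  intro L
  set k := (L + 1) * s₀ with hk
  set c := C₂ ^ 2 * ρ ^ k / 4 with hc
  have hcpos : 0 < c := by positivity
  refine ⟨c ^ r * C₃ ^ k, by positivity, ?_⟩
  intro σ hσ B hBne hBL
  have hIσlen := hlen σ hσ
  have hIσpos : 0 < v σ - u σ := lt_of_lt_of_le (by positivity) hIσlen.1
  set ℓ := C₂ * ρ ^ (σ.length + k) with hℓdef
  have hℓpos : 0 < ℓ := by positivity
  obtain ⟨S, hSmem, hScard⟩ := hS σ hσ (L + 1)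
  have hSlen : ∀ τ ∈ S, ℓ ≤ v τ - u τ := by
    intro τ hτ
    obtain ⟨hτT, _, hτlen⟩ := hSmem τ hτ
    have := (hlen τ hτT).1
    rw [hτlen] at this
    exact this
  -- killed intervals
  set K : ℝ → Finset (List A) :=
    fun b => S.filter (fun τ => ∃ x ∈ Set.Icc (u τ) (v τ), |x - b| < ℓ / 4) with hK
  have hK2 : ∀ b : ℝ, (K b).card ≤ 2 := by
    intro b
    by_contra h
    push_neg at h
    obtain ⟨τ₁, τ₂, τ₃, hτ₁, hτ₂, hτ₃, h12, h13, h23⟩ := Finset.two_lt_card_iff.mp h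
    have near : ∀ τ ∈ K b, u τ < b + ℓ/4 ∧ b - ℓ/4 < v τ := by
      intro τ hτ
      obtain ⟨-, x, hx, hxb⟩ := Finset.mem_filter.mp hτ
      have := abs_lt.mp hxb
      exact ⟨by linarith [hx.1, this.2], by linarith [hx.2, this.1]⟩
    have hmem : ∀ τ ∈ K b, τ ∈ S := fun τ hτ => (Finset.mem_filter.mp hτ).1
    have hlenS : ∀ τ ∈ K b, ℓ ≤ v τ - u τ := fun τ hτ => hSlen τ (hmem τ hτ)
    have hdisjS : ∀ τ ∈ K b, ∀ τ' ∈ K b, τ ≠ τ' →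
        Set.Ioo (u τ) (v τ) ∩ Set.Ioo (u τ') (v τ') = ∅ := by
      intro τ hτ τ' hτ' hneq
      have h1 := hSmem τ (hmem τ hτ)
      have h2 := hSmem τ' (hmem τ' hτ')
      exact hdisj τ h1.1 τ' h2.1 (by rw [h1.2.2, h2.2.2]) hneq
    exact three_intervals hℓpos (hlenS τ₁ hτ₁) (hlenS τ₂ hτ₂) (hlenS τ₃ hτ₃)
      (hdisjS τ₁ hτ₁ τ₂ hτ₂ h12) (hdisjS τ₁ hτ₁ τ₃ hτ₃ h13) (hdisjS τ₂ hτ₂ τ₃ hτ₃ h23)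
      (near τ₁ hτ₁) (near τ₂ hτ₂) (near τ₃ hτ₃)
  -- find a surviving interval
  have hexists : ∃ τ ∈ S, ∀ b ∈ B, τ ∉ K b := by
    by_contra h
    push_neg at h
    have hsub : S ⊆ B.biUnion K := by
      intro τ hτ
      obtain ⟨b, hb, hKb⟩ := h τ hτ
      exact Finset.mem_biUnion.mpr ⟨b, hb, hKb⟩
    have hcard : (B.biUnion K).card ≤ 2 * L :=
      calc (B.biUnion K).card ≤ ∑ b ∈ B, (K b).card := Finset.card_biUnion_le
        _ ≤ ∑ b ∈ B, 2 := Finset.sum_le_sum fun b _ => hK2 b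
        _ = 2 * B.card := by rw [Finset.sum_const, smul_eq_mul, Nat.mul_comm]
        _ ≤ 2 * L := Nat.mul_le_mul_left 2 hBL
    have h2L : 2 * L < 2 ^ (L + 1) := by
      have := Nat.lt_two_pow_self (n := L)
      calc 2 * L < 2 * 2 ^ L := by omega
        _ = 2 ^ (L + 1) := by ring
    have : 2 ^ (L + 1) ≤ 2 * L := hScard.trans ((Finset.card_le_card hsub).trans hcard)
    omega
  obtain ⟨τ, hτS, hτfar⟩ := hexists
  obtain ⟨hτT, hτpre, hτlen⟩ := hSmem τ hτS
  have hBne' : ((B : Set ℝ)).Nonempty := by exact_mod_cast hBne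
  have hfar : ∀ x ∈ Set.Icc (u τ) (v τ), ℓ / 4 ≤ Metric.infDist x (B : Set ℝ) := by
    intro x hx
    by_contra hlt
    push_neg at hlt
    obtain ⟨y, hy, hxy⟩ := (Metric.infDist_lt_iff hBne').mp hlt
    refine hτfar y (Finset.mem_coe.mp hy) (Finset.mem_filter.mpr ⟨hτS, x, hx, ?_⟩)
    rwa [Real.dist_eq] at hxy
  obtain ⟨hsub, hmeasge⟩ := hdesc k τ hτT σ hτpre (by rw [hk]; exact hτlen)
  have hf_cont : Continuous fun x : ℝ => Metric.infDist x (B : Set ℝ) ^ r :=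
    (Metric.continuous_infDist_pt (B : Set ℝ)).rpow_const fun x => Or.inr hr.le
  have hInt : IntegrableOn (fun x => Metric.infDist x (B : Set ℝ) ^ r) (Set.Icc (u σ) (v σ)) μ :=
    hf_cont.integrableOn_Icc
  have h1 : (∫ x in Set.Icc (u τ) (v τ), Metric.infDist x (B : Set ℝ) ^ r ∂μ) ≤
      ∫ x in Set.Icc (u σ) (v σ), Metric.infDist x (B : Set ℝ) ^ r ∂μ :=
    setIntegral_mono_set hInt
      (Filter.Eventually.of_forall fun x => Real.rpow_nonneg Metric.infDist_nonneg r)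
      (HasSubset.Subset.eventuallyLE hsub)
  have h2 : (ℓ / 4) ^ r * (μ (Set.Icc (u τ) (v τ))).toReal ≤
      ∫ x in Set.Icc (u τ) (v τ), Metric.infDist x (B : Set ℝ) ^ r ∂μ :=
    by have h := setIntegral_ge_of_const_le_real measurableSet_Icc (measure_ne_top μ _)
        (fun x hx => Real.rpow_le_rpow (by positivity) (hfar x hx) hr.le)
        (hInt.mono_set hsub)
       exact h
  have hμ' : C₃ ^ k * (μ (Set.Icc (u σ) (v σ))).toReal ≤ (μ (Set.Icc (u τ) (v τ))).toReal := by
    have := ENNReal.toReal_mono (measure_ne_top μ _) hmeasge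
    rwa [ENNReal.toReal_mul, ENNReal.toReal_ofReal (by positivity)] at this
  have hcb : c * (v σ - u σ) ≤ ℓ / 4 := by
    have h := hIσlen.2
    have h' : c * (v σ - u σ) ≤ c * (C₂⁻¹ * ρ ^ σ.length) :=
      mul_le_mul_of_nonneg_left h hcpos.le
    have heq : c * (C₂⁻¹ * ρ ^ σ.length) = ℓ / 4 := by
      rw [hc, hℓdef, pow_add]
      field_simp
    linarith
  have hPd : c ^ r * (v σ - u σ) ^ r ≤ (ℓ / 4) ^ r := by
    rw [← Real.mul_rpow hcpos.le hIσpos.le]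
    exact Real.rpow_le_rpow (by positivity) hcb hr.le
  calc c ^ r * C₃ ^ k * (μ (Set.Icc (u σ) (v σ))).toReal * (v σ - u σ) ^ r
      = (c ^ r * (v σ - u σ) ^ r) * (C₃ ^ k * (μ (Set.Icc (u σ) (v σ))).toReal) := by ring
    _ ≤ (ℓ / 4) ^ r * (μ (Set.Icc (u τ) (v τ))).toReal :=
        mul_le_mul hPd hμ' (by positivity) (by positivity)
    _ ≤ ∫ x in Set.Icc (u τ) (v τ), Metric.infDist x (B : Set ℝ) ^ r ∂μ := h2
    _ ≤ ∫ x in Set.Icc (u σ) (v σ), Metric.infDist x (B : Set ℝ) ^ r ∂μ := h1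
end

section
/- Consider the IFS f_1(x) = x/3, f_2(x) = x/3 + 1/9, f_3(x) = x/3 + 2/3 on ℝ with attractor E. Then the basic net intervals of order 1 are exactly ℱ_1 = {[0, 1/9], [1/9, 1/3], [1/3, 4/9], [2/3, 1]}; moreover [4/27, 2/9] is a basic net interval of order 2 contained in [1/9, 1/3], f_1(E) ∩ (1/9, 1/3) ≠ ∅, and f_1(E) ∩ (4/27, 2/9) = ∅ (so in particular f_{1∗k}(E) ∩ (4/27, 2/9) = ∅ for every k ∈ {1,2,3}). -/
open Set

theorem stmt14
    (f : Fin 3 → ℝ → ℝ)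
    (hf1 : ∀ x, f 0 x = x / 3) (hf2 : ∀ x, f 1 x = x / 3 + 1 / 9)
    (hf3 : ∀ x, f 2 x = x / 3 + 2 / 3)
    (E : Set ℝ) (hEcpt : IsCompact E) (hEne : E.Nonempty)
    (hE : E = ⋃ i, f i '' E) :
    (∀ a b : ℝ, IsNetInterval f E 1 a b ↔
      ((a, b) = ((0 : ℝ), (1 / 9 : ℝ)) ∨ (a, b) = ((1 / 9 : ℝ), (1 / 3 : ℝ)) ∨
        (a, b) = ((1 / 3 : ℝ), (4 / 9 : ℝ)) ∨ (a, b) = ((2 / 3 : ℝ), (1 : ℝ)))) ∧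
    IsNetInterval f E 2 (4 / 27) (2 / 9) ∧
    Set.Icc (4 / 27 : ℝ) (2 / 9) ⊆ Set.Icc (1 / 9 : ℝ) (1 / 3) ∧
    (f 0 '' E ∩ Set.Ioo (1 / 9 : ℝ) (1 / 3)).Nonempty ∧
    f 0 '' E ∩ Set.Ioo (4 / 27 : ℝ) (2 / 9) = ∅ ∧
    ∀ k : Fin 3, (f 0 ∘ f k) '' E ∩ Set.Ioo (4 / 27 : ℝ) (2 / 9) = ∅ := by
  -- invariance and basic structure
  have hsub : ∀ i, f i '' E ⊆ E := fun i =>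
    le_of_le_of_eq (Set.subset_iUnion (fun i => f i '' E) i) hE.symm
  have hmemE : ∀ i, ∀ x ∈ E, f i x ∈ E := fun i x hx => hsub i ⟨x, hx, rfl⟩
  have hEcover : ∀ x ∈ E, ∃ i, ∃ y ∈ E, f i y = x := by
    intro x hx
    rw [hE] at hx
    simpa [Set.mem_iUnion] using hx
  have hcases : ∀ (i : Fin 3) (y : ℝ), f i y = y/3 ∨ f i y = y/3 + 1/9 ∨ f i y = y/3 + 2/3 := by
    intro i y
    fin_cases i
    · exact Or.inl (hf1 y)
    · exact Or.inr (Or.inl (hf2 y))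
    · exact Or.inr (Or.inr (hf3 y))
  -- E ⊆ [0,1]
  have hE1 : ∀ x ∈ E, x ≤ 1 := by
    intro x hx
    have hsupmem := hEcpt.sSup_mem hEne
    obtain ⟨i, y, hyE, hfy⟩ := hEcover _ hsupmem
    have hy : y ≤ sSup E := le_csSup hEcpt.bddAbove hyE
    have hx' : x ≤ sSup E := le_csSup hEcpt.bddAbove hx
    rcases hcases i y with h|h|h <;> rw [h] at hfy <;> linarith
  have hE0 : ∀ x ∈ E, 0 ≤ x := by
    intro x hx
    have hinfmem := hEcpt.sInf_mem hEne
    obtain ⟨i, y, hyE, hfy⟩ := hEcover _ hinfmem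
    have hy : sInf E ≤ y := csInf_le hEcpt.bddBelow hyE
    have hx' : sInf E ≤ x := csInf_le hEcpt.bddBelow hx
    rcases hcases i y with h|h|h <;> rw [h] at hfy <;> linarith
  -- the gap (4/9, 2/3) misses E
  have hgap : ∀ x ∈ E, x ≤ 4/9 ∨ 2/3 ≤ x := by
    intro x hx
    obtain ⟨i, y, hyE, hfy⟩ := hEcover x hx
    have h0 := hE0 y hyE
    have h1 := hE1 y hyE
    rcases hcases i y with h|h|h <;> rw [h] at hfy
    · left; linarith
    · left; linarith
    · right; linarith
  -- 0 ∈ E and 1 ∈ E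
  have h0E : (0:ℝ) ∈ E := by
    obtain ⟨x0, hx0⟩ := hEne
    have hiterE : ∀ n, (f 0)^[n] x0 ∈ E := by
      intro n; induction n with
      | zero => simpa using hx0
      | succ n ih => rw [Function.iterate_succ_apply']; exact hmemE 0 _ ih
    have hiterval : ∀ n, (f 0)^[n] x0 = x0 * (1/3)^n := by
      intro n; induction n with
      | zero => simp
      | succ n ih => rw [Function.iterate_succ_apply', ih, hf1]; ring
    have htend : Filter.Tendsto (fun n => (f 0)^[n] x0) Filter.atTop (nhds 0) := by
      simp only [hiterval]
      have h := (tendsto_pow_atTop_nhds_zero_of_lt_one (by norm_num : (0:ℝ) ≤ 1/3)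
        (by norm_num)).const_mul x0
      simpa using h
    exact hEcpt.isClosed.mem_of_tendsto htend (Filter.Eventually.of_forall hiterE)
  have h1E : (1:ℝ) ∈ E := by
    obtain ⟨x0, hx0⟩ := hEne
    have hiterE : ∀ n, (f 2)^[n] x0 ∈ E := by
      intro n; induction n with
      | zero => simpa using hx0
      | succ n ih => rw [Function.iterate_succ_apply']; exact hmemE 2 _ ih
    have hiterval : ∀ n, (f 2)^[n] x0 = 1 + (x0 - 1) * (1/3)^n := by
      intro n; induction n with
      | zero => simp
      | succ n ih => rw [Function.iterate_succ_apply', ih, hf3]; ring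
    have htend : Filter.Tendsto (fun n => (f 2)^[n] x0) Filter.atTop (nhds 1) := by
      simp only [hiterval]
      have h := (tendsto_pow_atTop_nhds_zero_of_lt_one (by norm_num : (0:ℝ) ≤ 1/3)
        (by norm_num)).const_mul (x0 - 1)
      have h2 := h.const_add 1
      simpa using h2
    exact hEcpt.isClosed.mem_of_tendsto htend (Filter.Eventually.of_forall hiterE)
  -- specific points of E
  have h19E : (1/9:ℝ) ∈ E := by
    have h := hmemE 1 0 h0E; rw [hf2] at h; norm_num at h; exact h
  have h13E : (1/3:ℝ) ∈ E := by
    have h := hmemE 0 1 h1E; rw [hf1] at h; exact h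
  have h23E : (2/3:ℝ) ∈ E := by
    have h := hmemE 2 0 h0E; rw [hf3] at h; norm_num at h; exact h
  have h127E : (1/27:ℝ) ∈ E := by
    have h := hmemE 0 _ h19E; rw [hf1] at h; norm_num at h; exact h
  have h29E : (2/9:ℝ) ∈ E := by
    have h := hmemE 0 _ h23E; rw [hf1] at h; norm_num at h; exact h
  have h527E : (5/27:ℝ) ∈ E := by
    have h := hmemE 1 _ h29E; rw [hf2] at h; norm_num at h; exact h
  have h1927E : (19/27:ℝ) ∈ E := by
    have h := hmemE 2 _ h19E; rw [hf3] at h; norm_num at h; exact h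
  have h2881E : (28/81:ℝ) ∈ E := by
    have h := hmemE 1 _ h1927E; rw [hf2] at h; norm_num at h; exact h
  -- P1 characterization
  have hP1 : ∀ y : ℝ, y ∈ PnSet f 1 ↔
      (y = 0 ∨ y = 1/9 ∨ y = 1/3 ∨ y = 4/9 ∨ y = 2/3 ∨ y = 1) := by
    have key : ∀ (i : Fin 3) (z : ℝ), z = 0 ∨ z = 1 →
        (f i z = 0 ∨ f i z = 1/9 ∨ f i z = 1/3 ∨ f i z = 4/9 ∨ f i z = 2/3 ∨ f i z = 1) := by
      intro i z hz
      rcases hcases i z with h|h|h <;> rw [h] <;> rcases hz with rfl|rfl <;> norm_num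
    intro y
    constructor
    · rintro ⟨σ, hlen, hval⟩
      rcases σ with _ | ⟨i, _ | ⟨j, σ⟩⟩ <;> simp at hlen
      rcases hval with h|h <;>
        simp only [iterMap, Function.comp_apply, id_eq] at h <;> rw [← h]
      · exact key i 0 (Or.inl rfl)
      · exact key i 1 (Or.inr rfl)
    · intro h
      rcases h with rfl|rfl|rfl|rfl|rfl|rfl
      · exact ⟨[0], rfl, Or.inl (by simp [iterMap, hf1])⟩
      · exact ⟨[1], rfl, Or.inl (by simp [iterMap, hf2])⟩
      · exact ⟨[0], rfl, Or.inr (by simp [iterMap, hf1])⟩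
      · exact ⟨[1], rfl, Or.inr (by simp [iterMap, hf2]; norm_num)⟩
      · exact ⟨[2], rfl, Or.inl (by simp [iterMap, hf3])⟩
      · exact ⟨[2], rfl, Or.inr (by simp [iterMap, hf3]; norm_num)⟩
  -- separation for P2 around [4/27, 2/9]
  have hP2sep : ∀ y ∈ PnSet f 2, y ≤ 4/27 ∨ 2/9 ≤ y := by
    have key : ∀ (i j : Fin 3) (z : ℝ), z = 0 ∨ z = 1 →
        (f i (f j z) ≤ 4/27 ∨ 2/9 ≤ f i (f j z)) := by
      intro i j z hz
      rcases hcases i (f j z) with hi|hi|hi <;> rw [hi] <;>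
        rcases hcases j z with hj|hj|hj <;> rw [hj] <;>
        rcases hz with rfl|rfl <;> norm_num
    rintro y ⟨σ, hlen, hval⟩
    rcases σ with _ | ⟨i, _ | ⟨j, _ | ⟨k, σ⟩⟩⟩ <;> simp at hlen
    rcases hval with h|h <;>
      simp only [iterMap, Function.comp_apply, id_eq] at h <;> rw [← h]
    · exact key i j 0 (Or.inl rfl)
    · exact key i j 1 (Or.inr rfl)
  have h427P2 : (4/27 : ℝ) ∈ PnSet f 2 :=
    ⟨[0,1], rfl, Or.inr (by simp [iterMap, hf1, hf2]; norm_num)⟩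
  have h29P2 : (2/9 : ℝ) ∈ PnSet f 2 :=
    ⟨[0,2], rfl, Or.inl (by simp [iterMap, hf1, hf3]; norm_num)⟩
  -- f 0 '' E avoids (4/27, 2/9)
  have hf0empty : f 0 '' E ∩ Set.Ioo (4 / 27 : ℝ) (2 / 9) = ∅ := by
    ext x
    simp only [Set.mem_inter_iff, Set.mem_image, Set.mem_Ioo, Set.mem_empty_iff_false,
      iff_false]
    rintro ⟨⟨y, hyE, rfl⟩, h1, h2⟩
    rw [hf1] at h1 h2
    rcases hgap y hyE with h|h <;> linarith
  refine ⟨?_, ⟨h427P2, h29P2, by norm_num, hP2sep,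
      ⟨5/27, Set.mem_Ioo.mpr (by norm_num), h527E⟩⟩,
    ?_, ⟨2/9, ⟨2/3, h23E, by rw [hf1]; norm_num⟩, Set.mem_Ioo.mpr (by norm_num)⟩,
    hf0empty, ?_⟩
  · -- characterization of order-1 net intervals
    intro a b
    constructor
    · rintro ⟨ha, hb, hab, hsep, hne⟩
      have m19 : (1/9:ℝ) ∈ PnSet f 1 := (hP1 _).mpr (by norm_num)
      have m13 : (1/3:ℝ) ∈ PnSet f 1 := (hP1 _).mpr (by norm_num)
      have m49 : (4/9:ℝ) ∈ PnSet f 1 := (hP1 _).mpr (by norm_num)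
      have m23 : (2/3:ℝ) ∈ PnSet f 1 := (hP1 _).mpr (by norm_num)
      rw [hP1] at ha hb
      rcases ha with rfl|rfl|rfl|rfl|rfl|rfl <;> rcases hb with rfl|rfl|rfl|rfl|rfl|rfl <;>
        first
        | ((norm_num [Prod.ext_iff]); done)
        | ((norm_num at hab); done)
        | ((rcases hsep _ m19 with h|h <;> norm_num at h); done)
        | ((rcases hsep _ m13 with h|h <;> norm_num at h); done)
        | ((rcases hsep _ m49 with h|h <;> norm_num at h); done)
        | ((rcases hsep _ m23 with h|h <;> norm_num at h); done)
        | ((obtain ⟨x, hxI, hxE⟩ := hne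
            rcases hgap x hxE with h|h <;>
              · simp only [Set.mem_Ioo] at hxI; rcases hxI with ⟨hx1, hx2⟩; linarith); done)
    · intro h
      have hsep1 : ∀ c d : ℝ,
          (∀ y : ℝ, y = 0 ∨ y = 1/9 ∨ y = 1/3 ∨ y = 4/9 ∨ y = 2/3 ∨ y = 1 → y ≤ c ∨ d ≤ y) →
          ∀ y ∈ PnSet f 1, y ≤ c ∨ d ≤ y := by
        intro c d hcd y hy
        exact hcd y ((hP1 y).mp hy)
      rcases h with h|h|h|h <;>
        rw [Prod.ext_iff] at h <;> obtain ⟨rfl, rfl⟩ := h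
      · exact ⟨(hP1 _).mpr (by norm_num), (hP1 _).mpr (by norm_num), by norm_num,
          hsep1 _ _ (by rintro y (rfl|rfl|rfl|rfl|rfl|rfl) <;> norm_num),
          ⟨1/27, Set.mem_Ioo.mpr (by norm_num), h127E⟩⟩
      · exact ⟨(hP1 _).mpr (by norm_num), (hP1 _).mpr (by norm_num), by norm_num,
          hsep1 _ _ (by rintro y (rfl|rfl|rfl|rfl|rfl|rfl) <;> norm_num),
          ⟨2/9, Set.mem_Ioo.mpr (by norm_num), h29E⟩⟩
      · exact ⟨(hP1 _).mpr (by norm_num), (hP1 _).mpr (by norm_num), by norm_num,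
          hsep1 _ _ (by rintro y (rfl|rfl|rfl|rfl|rfl|rfl) <;> norm_num),
          ⟨28/81, Set.mem_Ioo.mpr (by norm_num), h2881E⟩⟩
      · exact ⟨(hP1 _).mpr (by norm_num), (hP1 _).mpr (by norm_num), by norm_num,
          hsep1 _ _ (by rintro y (rfl|rfl|rfl|rfl|rfl|rfl) <;> norm_num),
          ⟨19/27, Set.mem_Ioo.mpr (by norm_num), h1927E⟩⟩
  · -- Icc inclusion
    apply Set.Icc_subset_Icc <;> norm_num
  · -- the composed maps also avoid (4/27, 2/9)
    intro k
    apply Set.eq_empty_of_subset_empty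
    calc (f 0 ∘ f k) '' E ∩ Set.Ioo (4/27 : ℝ) (2/9)
        ⊆ f 0 '' E ∩ Set.Ioo (4/27 : ℝ) (2/9) := by
          apply Set.inter_subset_inter_left
          rw [Set.image_comp]
          exact Set.image_mono (hsub k)
      _ = ∅ := hf0empty
end
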